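/- arXiv:2107.00889 — 5 statements merged into one kernel-verified Lean document; each statement's English description precedes it below -/
import Mathlib

section
/- Let p be a prime, α > 0 a real number, n an integer, and a ∈ ℚ_p with |a|_p = p^n. Then the integral of |x - a|_p^{α-1} over the sphere {x : |x|_p = p^n} with respect to the normalized Haar measure equals ((p - 2 + p^{-α})/(p(1 - p^{-α}))) · |a|_p^α. -/
open MeasureTheory Topology Filter

noncomputable instance (p : ℕ) [Fact p.Prime] : MeasurableSpace ℚ_[p] := borel _
instance (p : ℕ) [Fact p.Prime] : BorelSpace ℚ_[p] := ⟨rfl⟩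

/-- The closed unit ball of `ℚ_[p]` as a positive compact set. -/
noncomputable def padicUnitBall (p : ℕ) [Fact p.Prime] :
    TopologicalSpace.PositiveCompacts ℚ_[p] where
  carrier := {x : ℚ_[p] | ‖x‖ ≤ 1}
  isCompact' := by
    have h : {x : ℚ_[p] | ‖x‖ ≤ 1} = Metric.closedBall 0 1 := by
      ext x; simp [dist_eq_norm]
    rw [h]
    exact isCompact_closedBall 0 1
  interior_nonempty' := by
    refine ⟨0, ?_⟩
    have h : Metric.ball (0 : ℚ_[p]) 1 ⊆ {x : ℚ_[p] | ‖x‖ ≤ 1} := by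
      intro x hx
      simp only [Metric.mem_ball, dist_eq_norm, sub_zero] at hx
      exact le_of_lt hx
    exact interior_maximal h Metric.isOpen_ball (Metric.mem_ball_self one_pos)

/-- The Haar measure on `ℚ_[p]`, normalized so that `ℤ_[p]` has measure 1. -/
noncomputable def padicHaar (p : ℕ) [Fact p.Prime] : Measure ℚ_[p] :=
  Measure.addHaarMeasure (padicUnitBall p)

namespace PadicHaarAux

instance (p : ℕ) [Fact p.Prime] : (padicHaar p).IsAddHaarMeasure := by
  unfold padicHaar; infer_instance

variable {p : ℕ} [hp : Fact p.Prime]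

/-- closed ball of radius p^m -/
def B (p : ℕ) [Fact p.Prime] (m : ℤ) : Set ℚ_[p] := {x | ‖x‖ ≤ (p : ℝ) ^ m}

/-- sphere of radius p^m -/
def S (p : ℕ) [Fact p.Prime] (m : ℤ) : Set ℚ_[p] := {x | ‖x‖ = (p : ℝ) ^ m}

lemma isClosed_B (m : ℤ) : IsClosed (B p m) :=
  isClosed_le continuous_norm continuous_const

lemma measB (m : ℤ) : MeasurableSet (B p m) := (isClosed_B m).measurableSet

lemma measS (m : ℤ) : MeasurableSet (S p m) :=
  (isClosed_eq continuous_norm continuous_const).measurableSet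

lemma q_pos : (0:ℝ) < (p:ℝ) := by
  exact_mod_cast hp.out.pos

lemma q_one_lt : (1:ℝ) < (p:ℝ) := by exact_mod_cast hp.out.one_lt

lemma meas_ball_zero : padicHaar p (B p 0) = 1 := by
  have : B p 0 = (padicUnitBall p : Set ℚ_[p]) := by
    ext x; simp [B, padicUnitBall]; exact Iff.rfl
  rw [this]
  exact Measure.addHaarMeasure_self

/-- translation invariance for these balls -/
lemma meas_shift (c : ℚ_[p]) (A : Set ℚ_[p]) :
    padicHaar p {x | x - c ∈ A} = padicHaar p A := by
  have : {x : ℚ_[p] | x - c ∈ A} = (fun x => -c + x) ⁻¹' A := by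
    ext x; simp [sub_eq_neg_add]
  rw [this]
  exact measure_preimage_add _ _ _

lemma ball_eq_iUnion (m : ℤ) :
    B p (m + 1) = ⋃ j : Fin p, {x : ℚ_[p] | x - (j : ℚ_[p]) * (p : ℚ_[p]) ^ (-(m+1)) ∈ B p m} := by
  have hq0 : ((p:ℚ_[p]) : ℚ_[p]) ≠ 0 := by
    exact_mod_cast (Nat.cast_ne_zero (R := ℚ_[p])).mpr hp.out.ne_zero
  ext x
  simp only [B, Set.mem_setOf_eq, Set.mem_iUnion]
  constructor
  · intro hx
    -- y = x * p^(m+1) has norm ≤ 1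
    set y : ℚ_[p] := x * (p : ℚ_[p]) ^ (m+1) with hy
    have hyn : ‖y‖ ≤ 1 := by
      rw [hy, norm_mul, Padic.norm_p_zpow]
      calc ‖x‖ * (p:ℝ) ^ (-(m+1)) ≤ (p:ℝ) ^ (m+1) * (p:ℝ) ^ (-(m+1)) := by
            apply mul_le_mul_of_nonneg_right hx (zpow_nonneg (le_of_lt q_pos) _)
        _ = 1 := by
            rw [← zpow_add₀ (ne_of_gt q_pos), show (m+1) + (-(m+1)) = 0 from by ring, zpow_zero]
    set z : ℤ_[p] := ⟨y, hyn⟩ with hz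
    refine ⟨⟨z.appr 1, by simpa using z.appr_lt 1⟩, ?_⟩
    have hspec : ‖z - (z.appr 1 : ℤ_[p])‖ ≤ (p:ℝ) ^ (-(1:ℕ):ℤ) :=
      (PadicInt.norm_le_pow_iff_mem_span_pow _ 1).mpr (PadicInt.appr_spec 1 z)
    have hyj : ‖y - (z.appr 1 : ℚ_[p])‖ ≤ (p:ℝ)⁻¹ := by
      have : ((z - (z.appr 1 : ℤ_[p]) : ℤ_[p]) : ℚ_[p]) = y - (z.appr 1 : ℚ_[p]) := by
        simp only [hz, PadicInt.coe_sub, PadicInt.coe_natCast]; rfl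
      rw [← this, PadicInt.padic_norm_e_of_padicInt]
      simpa using hspec
    have hpp : (p:ℚ_[p]) ^ (m+1) * (p : ℚ_[p]) ^ (-(m+1)) = 1 := by
      rw [← zpow_add₀ hq0, show (m+1) + (-(m+1)) = 0 from by ring, zpow_zero]
    have key : x - ((z.appr 1 : ℕ) : ℚ_[p]) * (p : ℚ_[p]) ^ (-(m+1))
        = (y - (z.appr 1 : ℚ_[p])) * (p : ℚ_[p]) ^ (-(m+1)) := by
      calc x - ((z.appr 1 : ℕ) : ℚ_[p]) * (p : ℚ_[p]) ^ (-(m+1))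
          = x * ((p:ℚ_[p]) ^ (m+1) * (p : ℚ_[p]) ^ (-(m+1)))
            - ((z.appr 1 : ℕ) : ℚ_[p]) * (p : ℚ_[p]) ^ (-(m+1)) := by rw [hpp, mul_one]
        _ = (y - (z.appr 1 : ℚ_[p])) * (p : ℚ_[p]) ^ (-(m+1)) := by rw [hy]; push_cast; ring
    push_cast
    rw [key, norm_mul, Padic.norm_p_zpow]
    calc ‖y - (z.appr 1 : ℚ_[p])‖ * (p:ℝ) ^ (-(-(m+1)))
        ≤ (p:ℝ)⁻¹ * (p:ℝ) ^ (m+1) := by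
          rw [neg_neg]
          exact mul_le_mul_of_nonneg_right hyj (zpow_nonneg (le_of_lt q_pos) _)
      _ = (p:ℝ) ^ m := by
          rw [← zpow_neg_one, ← zpow_add₀ (ne_of_gt q_pos)]; ring_nf
  · rintro ⟨j, hj⟩
    have hc : ‖(j : ℚ_[p]) * (p : ℚ_[p]) ^ (-(m+1))‖ ≤ (p:ℝ) ^ (m+1) := by
      rw [norm_mul, Padic.norm_p_zpow, neg_neg]
      calc ‖((j:ℕ) : ℚ_[p])‖ * (p:ℝ) ^ (m+1) ≤ 1 * (p:ℝ) ^ (m+1) := by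
            apply mul_le_mul_of_nonneg_right _ (zpow_nonneg (le_of_lt q_pos) _)
            exact_mod_cast Padic.norm_int_le_one ((j:ℕ) : ℤ)
        _ = (p:ℝ) ^ (m+1) := one_mul _
    calc ‖x‖ = ‖(x - (j : ℚ_[p]) * (p : ℚ_[p]) ^ (-(m+1))) + (j : ℚ_[p]) * (p : ℚ_[p]) ^ (-(m+1))‖ := by
          ring_nf
      _ ≤ max ‖x - (j : ℚ_[p]) * (p : ℚ_[p]) ^ (-(m+1))‖ ‖(j : ℚ_[p]) * (p : ℚ_[p]) ^ (-(m+1))‖ :=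
          Padic.nonarchimedean _ _
      _ ≤ (p:ℝ) ^ (m+1) := by
          apply max_le _ hc
          calc ‖x - (j : ℚ_[p]) * (p : ℚ_[p]) ^ (-(m+1))‖ ≤ (p:ℝ)^m := hj
            _ ≤ (p:ℝ)^(m+1) := by
                apply zpow_le_zpow_right₀ (le_of_lt q_one_lt) (by omega)

lemma ball_disj (m : ℤ) :
    Pairwise (Function.onFun Disjoint
      (fun j : Fin p => {x : ℚ_[p] | x - (j : ℚ_[p]) * (p : ℚ_[p]) ^ (-(m+1)) ∈ B p m})) := by
  intro j j' hne
  rw [Function.onFun, Set.disjoint_left]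
  intro x hxj hxj'
  simp only [B, Set.mem_setOf_eq] at hxj hxj'
  have hd : ‖((j : ℚ_[p]) - (j' : ℚ_[p])) * (p : ℚ_[p]) ^ (-(m+1))‖ ≤ (p:ℝ)^m := by
    have : ((j : ℚ_[p]) - (j' : ℚ_[p])) * (p : ℚ_[p]) ^ (-(m+1))
        = (x - (j' : ℚ_[p]) * (p : ℚ_[p]) ^ (-(m+1))) - (x - (j : ℚ_[p]) * (p : ℚ_[p]) ^ (-(m+1))) := by
      ring
    rw [this]
    have harch := Padic.nonarchimedean (x - (j' : ℚ_[p]) * (p : ℚ_[p]) ^ (-(m+1)))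
      (-(x - (j : ℚ_[p]) * (p : ℚ_[p]) ^ (-(m+1))))
    rw [← sub_eq_add_neg, norm_neg] at harch
    exact le_trans harch (max_le hxj' hxj)
  have hnorm1 : ‖((j : ℚ_[p]) - (j' : ℚ_[p]))‖ = 1 := by
    have hint : ((j : ℚ_[p]) - (j' : ℚ_[p])) = (((j:ℕ) : ℤ) - ((j':ℕ) : ℤ) : ℤ) := by push_cast; ring
    rw [hint]
    have hne' : (((j:ℕ) : ℤ) - ((j':ℕ) : ℤ)) ≠ 0 := by
      simp only [sub_ne_zero]
      exact_mod_cast fun h => hne (Fin.ext (by exact_mod_cast h))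
    have hndvd : ¬ ((p:ℤ) ∣ (((j:ℕ) : ℤ) - ((j':ℕ) : ℤ))) := by
      intro hdvd
      have hjl := j.isLt; have hjl' := j'.isLt
      have h1 : |(((j:ℕ) : ℤ) - ((j':ℕ) : ℤ))| < p := by
        rw [abs_lt]; constructor <;> omega
      have h2 : (p:ℤ) ≤ |(((j:ℕ) : ℤ) - ((j':ℕ) : ℤ))| :=
        Int.le_of_dvd (abs_pos.mpr hne') ((dvd_abs _ _).mpr hdvd)
      linarith
    have hle := Padic.norm_int_le_one (p := p) (((j:ℕ) : ℤ) - ((j':ℕ) : ℤ))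
    have hlt := (Padic.norm_intCast_lt_one_iff (p := p) (k := ((j:ℕ) : ℤ) - ((j':ℕ) : ℤ))).not.mpr hndvd
    push_neg at hlt
    linarith
  rw [norm_mul, hnorm1, one_mul, Padic.norm_p_zpow, neg_neg] at hd
  have : (p:ℝ)^m < (p:ℝ)^(m+1) := by
    apply zpow_lt_zpow_right₀ q_one_lt (by omega)
  linarith

lemma meas_ball_succ (m : ℤ) :
    padicHaar p (B p (m+1)) = (p : ENNReal) * padicHaar p (B p m) := by
  rw [ball_eq_iUnion m, measure_iUnion (ball_disj m) (fun j => by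
    have : {x : ℚ_[p] | x - (j : ℚ_[p]) * (p : ℚ_[p]) ^ (-(m+1)) ∈ B p m}
        = (fun x : ℚ_[p] => x - (j : ℚ_[p]) * (p : ℚ_[p]) ^ (-(m+1))) ⁻¹' B p m := rfl
    rw [this]
    exact (measB m).preimage (measurable_id.sub_const _))]
  have heach : ∀ j : Fin p,
      padicHaar p {x : ℚ_[p] | x - (j : ℚ_[p]) * (p : ℚ_[p]) ^ (-(m+1)) ∈ B p m}
        = padicHaar p (B p m) := fun j => meas_shift _ _
  simp only [heach, tsum_fintype, Finset.sum_const, Finset.card_univ, Fintype.card_fin,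
    nsmul_eq_mul]

lemma meas_ball (m : ℤ) : padicHaar p (B p m) = ENNReal.ofReal ((p:ℝ) ^ m) := by
  have hp0 : (p : ENNReal) ≠ 0 := by
    exact_mod_cast Nat.cast_ne_zero.mpr hp.out.ne_zero
  have hptop : (p : ENNReal) ≠ ⊤ := ENNReal.natCast_ne_top p
  have hcast : (p : ENNReal) = ENNReal.ofReal (p : ℝ) := by
    rw [ENNReal.ofReal_natCast]
  have hstep : ∀ k : ℤ, ENNReal.ofReal ((p:ℝ) ^ (k+1)) = (p : ENNReal) * ENNReal.ofReal ((p:ℝ) ^ k) := by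
    intro k
    rw [hcast, ← ENNReal.ofReal_mul (le_of_lt q_pos), ← zpow_one_add₀ (ne_of_gt q_pos)]
    ring_nf
  induction m using Int.induction_on with
  | zero => simpa using meas_ball_zero
  | succ k ih => rw [meas_ball_succ, ih, hstep]
  | pred k ih =>
    have h1 : padicHaar p (B p (-(k:ℤ) - 1 + 1)) = (p : ENNReal) * padicHaar p (B p (-(k:ℤ) - 1)) :=
      meas_ball_succ _
    rw [show (-(k:ℤ) - 1 + 1) = -(k:ℤ) from by ring, ih,
      show (-(k:ℤ)) = (-(k:ℤ) - 1) + 1 from by ring, hstep] at h1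
    rw [show (-(k:ℤ) - 1) = -((k:ℤ)+1) from by ring] at h1 ⊢
    have h2 := congrArg (fun x => (p : ENNReal)⁻¹ * x) h1
    simp only [← mul_assoc, ENNReal.inv_mul_cancel hp0 hptop, one_mul] at h2
    rw [show (-((k:ℤ) + 1) + 1 - 1) = -((k:ℤ)+1) from by ring] at h2
    exact h2.symm

lemma ball_subset (m m' : ℤ) (h : m ≤ m') : B p m ⊆ B p m' := fun x hx =>
  le_trans hx (zpow_le_zpow_right₀ (le_of_lt q_one_lt) h)

lemma sphere_eq (m : ℤ) : S p m = B p m \ B p (m-1) := by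
  ext x
  simp only [S, B, Set.mem_setOf_eq, Set.mem_diff]
  constructor
  · intro h
    refine ⟨le_of_eq h, ?_⟩
    rw [h]
    push_neg
    exact zpow_lt_zpow_right₀ q_one_lt (by omega)
  · rintro ⟨h1, h2⟩
    push_neg at h2
    rcases lt_or_eq_of_le h1 with hlt | heq
    · exfalso
      rw [show m = (m - 1) + 1 from by ring] at hlt
      exact absurd ((Padic.norm_le_pow_iff_norm_lt_pow_add_one x (m-1)).mpr hlt) (not_le.mpr h2)
    · exact heq

lemma meas_sphere (m : ℤ) :
    padicHaar p (S p m) = ENNReal.ofReal ((p:ℝ) ^ m - (p:ℝ) ^ (m-1)) := by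
  rw [sphere_eq, measure_diff (ball_subset _ _ (by omega)) (measB (m-1)).nullMeasurableSet
    (by rw [meas_ball]; exact ENNReal.ofReal_ne_top),
    meas_ball, meas_ball, ENNReal.ofReal_sub _ (zpow_nonneg (le_of_lt q_pos) _)]

lemma meas_zero_singleton : padicHaar p {(0 : ℚ_[p])} = 0 := by
  have hk : ∀ k : ℕ, padicHaar p {(0 : ℚ_[p])} ≤ ENNReal.ofReal ((p:ℝ) ^ (-(k:ℤ))) := by
    intro k
    rw [← meas_ball]
    apply measure_mono
    intro x hx
    simp only [Set.mem_singleton_iff] at hx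
    simp [B, hx, zpow_nonneg (le_of_lt q_pos)]
  have htend : Tendsto (fun k : ℕ => ENNReal.ofReal ((p:ℝ) ^ (-(k:ℤ)))) atTop (𝓝 0) := by
    have hreal : Tendsto (fun k : ℕ => (p:ℝ) ^ (-(k:ℤ))) atTop (𝓝 0) := by
      have : ∀ k : ℕ, (p:ℝ) ^ (-(k:ℤ)) = ((p:ℝ)⁻¹) ^ k := by
        intro k; rw [zpow_neg, ← zpow_natCast, inv_zpow]
      simp only [this]
      apply tendsto_pow_atTop_nhds_zero_of_lt_one
      · positivity
      · rw [inv_lt_one_iff₀]; right; exact q_one_lt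
    have := (ENNReal.continuous_ofReal.tendsto 0).comp hreal
    simpa [Function.comp_def] using this
  have := ge_of_tendsto' htend hk
  exact le_antisymm this zero_le

section Alpha

variable (α : ℝ)

lemma sphere_lint (m : ℤ) :
    ∫⁻ x in S p m, ENNReal.ofReal (‖x‖ ^ (α - 1)) ∂(padicHaar p)
      = ENNReal.ofReal ((((p:ℝ) ^ m) ^ (α - 1)) * ((p:ℝ) ^ m - (p:ℝ) ^ (m-1))) := by
  rw [setLIntegral_congr_fun_ae (measS m)
    (ae_of_all _ (fun x (hx : ‖x‖ = (p:ℝ)^m) => by rw [hx]))]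
  rw [setLIntegral_const, meas_sphere,
    ← ENNReal.ofReal_mul (Real.rpow_nonneg (zpow_nonneg (le_of_lt q_pos) _) _)]

lemma ball_decomp (m : ℤ) : B p m = {(0:ℚ_[p])} ∪ ⋃ k : ℕ, S p (m - k) := by
  ext x
  simp only [B, S, Set.mem_setOf_eq, Set.mem_union, Set.mem_singleton_iff, Set.mem_iUnion]
  constructor
  · intro hx
    rcases eq_or_ne x 0 with h0 | h0
    · exact Or.inl h0
    · right
      have hval := Padic.norm_eq_zpow_neg_valuation h0
      set j : ℤ := -x.valuation with hj
      have hjm : j ≤ m := by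
        by_contra hlt
        push_neg at hlt
        have : (p:ℝ)^m < (p:ℝ)^j := zpow_lt_zpow_right₀ q_one_lt hlt
        rw [← hval] at this
        linarith
      refine ⟨(m - j).toNat, ?_⟩
      rw [hval, show m - ((m - j).toNat : ℤ) = j from by omega]
  · rintro (h0 | ⟨k, hk⟩)
    · simp [h0, zpow_nonneg (le_of_lt q_pos)]
    · rw [hk]
      exact zpow_le_zpow_right₀ (le_of_lt q_one_lt) (by omega)

lemma sphere_pairwise_disj (m : ℤ) :
    Pairwise (Function.onFun Disjoint (fun k : ℕ => S p (m - k))) := by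
  intro k k' hne
  rw [Function.onFun, Set.disjoint_left]
  intro x hx hx'
  simp only [S, Set.mem_setOf_eq] at hx hx'
  rw [hx] at hx'
  have := zpow_right_injective₀ q_pos (ne_of_gt q_one_lt) hx'.symm
  omega

lemma term_eq (m : ℤ) (k : ℕ) :
    (((p:ℝ) ^ (m - (k:ℤ))) ^ (α - 1)) * ((p:ℝ) ^ (m - (k:ℤ)) - (p:ℝ) ^ (m - (k:ℤ) - 1))
      = ((p:ℝ) ^ m) ^ α * (1 - (p:ℝ)⁻¹) * ((p:ℝ) ^ (-α)) ^ k := by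
  have hq : (0:ℝ) < (p:ℝ) := q_pos
  have e1 : (p:ℝ) ^ (m - (k:ℤ)) = (p:ℝ) ^ (((m:ℝ) - k)) := by
    rw [← Real.rpow_intCast (p:ℝ) (m - (k:ℤ))]; push_cast; ring_nf
  have e2 : (p:ℝ) ^ (m - (k:ℤ) - 1) = (p:ℝ) ^ (((m:ℝ) - k - 1)) := by
    rw [← Real.rpow_intCast (p:ℝ) (m - (k:ℤ) - 1)]; push_cast; ring_nf
  have e3 : (p:ℝ) ^ m = (p:ℝ) ^ ((m:ℝ)) := by
    rw [← Real.rpow_intCast (p:ℝ) m]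
  have e4 : ((p:ℝ) ^ (-α)) ^ k = (p:ℝ) ^ ((-α) * k) := by
    rw [← Real.rpow_natCast ((p:ℝ) ^ (-α)) k, ← Real.rpow_mul hq.le]
  rw [e1, e2, e3, e4, ← Real.rpow_mul hq.le, ← Real.rpow_mul hq.le]
  calc (p:ℝ) ^ (((m:ℝ) - k) * (α - 1)) * ((p:ℝ) ^ ((m:ℝ) - k) - (p:ℝ) ^ ((m:ℝ) - k - 1))
      = (p:ℝ) ^ (((m:ℝ) - k) * (α - 1)) * ((p:ℝ) ^ ((m:ℝ) - k)
          - (p:ℝ) ^ ((m:ℝ) - k) * (p:ℝ) ^ (-1:ℝ)) := by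
        rw [show (m:ℝ) - k - 1 = ((m:ℝ) - k) + (-1) from by ring, Real.rpow_add hq]
    _ = (p:ℝ) ^ (((m:ℝ) - k) * (α - 1)) * (p:ℝ) ^ ((m:ℝ) - k) * (1 - (p:ℝ) ^ (-1:ℝ)) := by ring
    _ = (p:ℝ) ^ (((m:ℝ) - k) * (α - 1) + ((m:ℝ) - k)) * (1 - (p:ℝ) ^ (-1:ℝ)) := by
        rw [← Real.rpow_add hq]
    _ = (p:ℝ) ^ ((m:ℝ) * α + (-α) * k) * (1 - (p:ℝ) ^ (-1:ℝ)) := by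
        rw [show ((m:ℝ) - k) * (α - 1) + ((m:ℝ) - k) = (m:ℝ) * α + (-α) * k from by ring]
    _ = (p:ℝ) ^ ((m:ℝ) * α) * (1 - (p:ℝ)⁻¹) * (p:ℝ) ^ ((-α) * (k:ℝ)) := by
        rw [Real.rpow_add hq, Real.rpow_neg_one]; ring

lemma ball_lint (hα : 0 < α) (m : ℤ) :
    ∫⁻ x in B p m, ENNReal.ofReal (‖x‖ ^ (α - 1)) ∂(padicHaar p)
      = ENNReal.ofReal (((p:ℝ) ^ m) ^ α * (1 - (p:ℝ)⁻¹) / (1 - (p:ℝ) ^ (-α))) := by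
  have ht0 : 0 ≤ (p:ℝ) ^ (-α) := Real.rpow_nonneg (le_of_lt q_pos) _
  have ht1 : (p:ℝ) ^ (-α) < 1 :=
    Real.rpow_lt_one_of_one_lt_of_neg q_one_lt (neg_lt_zero.mpr hα)
  have hdisj : Disjoint ({(0:ℚ_[p])} : Set ℚ_[p]) (⋃ k : ℕ, S p (m - k)) := by
    rw [Set.disjoint_left]
    rintro x hx hx'
    simp only [Set.mem_singleton_iff] at hx
    simp only [Set.mem_iUnion, S, Set.mem_setOf_eq, hx, norm_zero] at hx'
    rcases hx' with ⟨k, hk⟩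
    have : (0:ℝ) < (p:ℝ) ^ (m - (k:ℤ)) := zpow_pos q_pos _
    linarith
  rw [ball_decomp, lintegral_union (MeasurableSet.iUnion fun k => measS _) hdisj,
    setLIntegral_measure_zero _ _ meas_zero_singleton, zero_add,
    lintegral_iUnion (fun k => measS _) (sphere_pairwise_disj m)]
  have hterm : ∀ k : ℕ,
      ∫⁻ x in S p (m - (k:ℤ)), ENNReal.ofReal (‖x‖ ^ (α - 1)) ∂(padicHaar p)
        = ENNReal.ofReal (((p:ℝ) ^ m) ^ α * (1 - (p:ℝ)⁻¹) * ((p:ℝ) ^ (-α)) ^ k) := by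
    intro k
    rw [sphere_lint, term_eq]
  rw [tsum_congr hterm,
    ← ENNReal.ofReal_tsum_of_nonneg (fun k => mul_nonneg (mul_nonneg
        (Real.rpow_nonneg (zpow_nonneg q_pos.le _) _)
        (by rw [sub_nonneg]; exact inv_le_one_of_one_le₀ (le_of_lt q_one_lt)))
        (pow_nonneg ht0 k))
      ((summable_geometric_of_lt_one ht0 ht1).mul_left _)]
  congr 1
  rw [tsum_mul_left, tsum_geometric_of_lt_one ht0 ht1, div_eq_mul_inv]
end Alpha
end PadicHaarAux

lemma rpow_const_measurable (c : ℝ) : Measurable (fun y : ℝ => y ^ c) := by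
  measurability

set_option maxHeartbeats 1000000 in
open PadicHaarAux in
theorem stmt1 (p : ℕ) [Fact p.Prime] (α : ℝ) (hα : 0 < α) (n : ℤ) (a : ℚ_[p])
    (ha : ‖a‖ = (p : ℝ) ^ n) :
    ∫ x in {x : ℚ_[p] | ‖x‖ = (p : ℝ) ^ n}, ‖x - a‖ ^ (α - 1) ∂(padicHaar p)
      = (((p : ℝ) - 2 + (p : ℝ) ^ (-α)) / ((p : ℝ) * (1 - (p : ℝ) ^ (-α)))) * ‖a‖ ^ α := by
  have hq : (0:ℝ) < (p:ℝ) := q_pos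
  have hq1 : (1:ℝ) < (p:ℝ) := q_one_lt
  have hp2 : (2:ℝ) ≤ (p:ℝ) := by exact_mod_cast ‹Fact p.Prime›.out.two_le
  have ht0 : 0 ≤ (p:ℝ) ^ (-α) := Real.rpow_nonneg hq.le _
  have ht1 : (p:ℝ) ^ (-α) < 1 :=
    Real.rpow_lt_one_of_one_lt_of_neg hq1 (neg_lt_zero.mpr hα)
  set t : ℝ := (p:ℝ) ^ (-α) with htdef
  have hPn : (p:ℝ) ^ n = (p:ℝ) * (p:ℝ) ^ (n-1) := by
    have h := zpow_add_one₀ (ne_of_gt hq) (n-1)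
    rw [show n - 1 + 1 = n from by ring] at h
    rw [h]; ring
  have h2n : 2 * (p:ℝ) ^ (n-1) ≤ (p:ℝ) ^ n := by
    nlinarith [zpow_pos hq (n-1)]
  set μ := padicHaar p with hμ
  set Sn : Set ℚ_[p] := {x | ‖x‖ = (p:ℝ) ^ n} with hSn
  set U : Set ℚ_[p] := {x | ‖x - a‖ ≤ (p:ℝ) ^ (n-1)} with hUdef
  have hUmeas : MeasurableSet U :=
    (isClosed_le ((continuous_id.sub continuous_const).norm) continuous_const).measurableSet
  have hUsub : U ⊆ Sn := by
    intro x hx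
    have hxa : ‖x - a‖ ≤ (p:ℝ) ^ (n-1) := hx
    have hlt : ‖x - a‖ < ‖a‖ := by
      rw [ha]
      exact lt_of_le_of_lt hxa (zpow_lt_zpow_right₀ hq1 (by omega))
    have hne : ‖x - a‖ ≠ ‖a‖ := ne_of_lt hlt
    have : ‖x‖ = max ‖x - a‖ ‖a‖ := by
      have := Padic.add_eq_max_of_ne hne
      simpa using this
    rw [hSn]
    simp only [Set.mem_setOf_eq]
    rw [this, max_eq_right hlt.le, ha]
  set V : Set ℚ_[p] := Sn \ U with hVdef
  have hSnmeas : MeasurableSet Sn := measS n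
  have hVmeas : MeasurableSet V := hSnmeas.diff hUmeas
  have hUnion : Sn = U ∪ V := (Set.union_diff_cancel hUsub).symm
  -- norm on V
  have hVnorm : ∀ x ∈ V, ‖x - a‖ = (p:ℝ) ^ n := by
    rintro x ⟨hxS, hxU⟩
    have hxn : ‖x‖ = (p:ℝ) ^ n := hxS
    have hle : ‖x - a‖ ≤ (p:ℝ) ^ n := by
      have := Padic.nonarchimedean x (-a)
      rw [← sub_eq_add_neg, norm_neg] at this
      refine le_trans this (max_le (le_of_eq hxn) (le_of_eq ha))
    rcases lt_or_eq_of_le hle with hlt | heq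
    · exfalso
      apply hxU
      have := (Padic.norm_le_pow_iff_norm_lt_pow_add_one (x - a) (n-1)).mpr
        (by rw [show n - 1 + 1 = n from by ring]; exact hlt)
      exact this
    · exact heq
  -- measures
  have hmeasU : μ U = ENNReal.ofReal ((p:ℝ) ^ (n-1)) := by
    have : U = {x : ℚ_[p] | x - a ∈ B p (n-1)} := rfl
    rw [this, hμ, meas_shift a (B p (n-1)), meas_ball]
  have hmeasSn : μ Sn = ENNReal.ofReal ((p:ℝ) ^ n - (p:ℝ) ^ (n-1)) := meas_sphere n
  have hmeasV : μ V = ENNReal.ofReal ((p:ℝ) ^ n - 2 * (p:ℝ) ^ (n-1)) := by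
    rw [hVdef, measure_diff hUsub hUmeas.nullMeasurableSet
      (by rw [hmeasU]; exact ENNReal.ofReal_ne_top), hmeasSn, hmeasU,
      ← ENNReal.ofReal_sub _ (zpow_nonneg hq.le _)]
    ring_nf
  -- integrand measurable
  have hfmeas : Measurable (fun x : ℚ_[p] => ‖x - a‖ ^ (α - 1)) := by
    exact (rpow_const_measurable (α - 1)).comp ((continuous_id.sub continuous_const).norm.measurable)
  -- to lintegral
  rw [MeasureTheory.integral_eq_lintegral_of_nonneg_ae
    (ae_of_all _ fun x => Real.rpow_nonneg (norm_nonneg _) _)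
    hfmeas.aestronglyMeasurable.restrict]
  -- split
  have hsplit : ∫⁻ x in Sn, ENNReal.ofReal (‖x - a‖ ^ (α - 1)) ∂μ
      = (∫⁻ x in U, ENNReal.ofReal (‖x - a‖ ^ (α - 1)) ∂μ)
        + ∫⁻ x in V, ENNReal.ofReal (‖x - a‖ ^ (α - 1)) ∂μ := by
    rw [hUnion, lintegral_union hVmeas Set.disjoint_sdiff_right]
  -- U part
  have hUint : ∫⁻ x in U, ENNReal.ofReal (‖x - a‖ ^ (α - 1)) ∂μ
      = ENNReal.ofReal (((p:ℝ) ^ (n-1)) ^ α * (1 - (p:ℝ)⁻¹) / (1 - t)) := by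
    have hind : ∀ x : ℚ_[p],
        U.indicator (fun x => ENNReal.ofReal (‖x - a‖ ^ (α - 1))) x
          = (B p (n-1)).indicator (fun y => ENNReal.ofReal (‖y‖ ^ (α - 1))) (x + (-a)) := by
      intro x
      have hmem : x ∈ U ↔ x + -a ∈ B p (n-1) := by
        rw [hUdef, ← sub_eq_add_neg]; exact Iff.rfl
      by_cases hx : x ∈ U
      · rw [Set.indicator_of_mem hx, Set.indicator_of_mem (hmem.mp hx), ← sub_eq_add_neg]
      · rw [Set.indicator_of_notMem hx, Set.indicator_of_notMem (fun h => hx (hmem.mpr h))]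
    rw [← lintegral_indicator hUmeas, lintegral_congr hind,
      lintegral_add_right_eq_self
        ((B p (n-1)).indicator (fun y => ENNReal.ofReal (‖y‖ ^ (α - 1)))) (-a),
      lintegral_indicator (measB (n-1)), hμ, ball_lint α hα (n-1)]
  -- V part
  have hVint : ∫⁻ x in V, ENNReal.ofReal (‖x - a‖ ^ (α - 1)) ∂μ
      = ENNReal.ofReal (((p:ℝ) ^ n) ^ (α - 1) * ((p:ℝ) ^ n - 2 * (p:ℝ) ^ (n-1))) := by
    rw [setLIntegral_congr_fun_ae hVmeas (ae_of_all _ (fun x hx => by rw [hVnorm x hx])),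
      setLIntegral_const, hmeasV,
      ← ENNReal.ofReal_mul (Real.rpow_nonneg (zpow_nonneg hq.le _) _)]
  have hAU : 0 ≤ ((p:ℝ) ^ (n-1)) ^ α * (1 - (p:ℝ)⁻¹) / (1 - t) := by
    apply div_nonneg _ (by linarith)
    apply mul_nonneg (Real.rpow_nonneg (zpow_nonneg hq.le _) _)
    rw [sub_nonneg]
    exact inv_le_one_of_one_le₀ hq1.le
  have hBV : 0 ≤ ((p:ℝ) ^ n) ^ (α - 1) * ((p:ℝ) ^ n - 2 * (p:ℝ) ^ (n-1)) := by
    apply mul_nonneg (Real.rpow_nonneg (zpow_nonneg hq.le _) _)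
    linarith
  rw [hsplit, hUint, hVint, ← ENNReal.ofReal_add hAU hBV, ENNReal.toReal_ofReal (by linarith)]
  -- final real algebra
  rw [ha]
  have hP : (0:ℝ) < (p:ℝ) ^ n := zpow_pos hq _
  have e1 : ((p:ℝ) ^ (n-1) : ℝ) ^ α = ((p:ℝ) ^ n) ^ α * t := by
    rw [← Real.rpow_intCast (p:ℝ) (n-1), ← Real.rpow_intCast (p:ℝ) n,
      ← Real.rpow_mul hq.le, ← Real.rpow_mul hq.le, htdef, ← Real.rpow_add hq]
    congr 1
    push_cast
    ring
  have e2 : ((p:ℝ) ^ n : ℝ) ^ (α - 1) = ((p:ℝ) ^ n) ^ α / (p:ℝ) ^ n := by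
    rw [Real.rpow_sub hP, Real.rpow_one]
  have ht1' : (0:ℝ) < 1 - t := by linarith
  rw [e1, e2, hPn]
  field_simp
  ring
end

section
/- Let p be a prime, 0 < α < 1, and τ ∈ ℚ_p with |τ|_p < 1. Then the integral of |ξ|_p^{-α-1}·(|ξ + τ|_p^{α-1} - |τ|_p^{α-1}) over {ξ : |ξ|_p ≥ 1} with respect to the normalized Haar measure equals 1 - (1 - 1/p)·(1/(1 - p^{-α}))·|τ|_p^{α-1}. -/
open MeasureTheory Topology Filter

open scoped ENNReal NNReal

section Aux

variable (p : ℕ) [Fact p.Prime]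

instance padicHaar_isAddHaar : (padicHaar p).IsAddHaarMeasure :=
  Measure.isAddHaarMeasure_addHaarMeasure _

lemma padicBall_measurableSet (r : ℝ) : MeasurableSet {x : ℚ_[p] | ‖x‖ ≤ r} :=
  measurableSet_le measurable_norm measurable_const

lemma hp1R : 1 < (p : ℝ) := by exact_mod_cast (Fact.out : p.Prime).one_lt

lemma hpR0 : (p : ℝ) ≠ 0 := by have := hp1R p; linarith

lemma padicHaar_ball_succ (n : ℤ) :
    padicHaar p {x : ℚ_[p] | ‖x‖ ≤ (p : ℝ) ^ n}
      = p * padicHaar p {x : ℚ_[p] | ‖x‖ ≤ (p : ℝ) ^ (n - 1)} := by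
  have hp1 : 1 < (p : ℝ) := hp1R p
  have hp0 : (p : ℝ) ≠ 0 := by positivity
  have hpQ : (p : ℚ_[p]) ≠ 0 := by
    exact_mod_cast Nat.cast_ne_zero.2 (Fact.out : p.Prime).ne_zero
  set B : Set ℚ_[p] := {x | ‖x‖ ≤ (p : ℝ) ^ (n - 1)} with hB
  set c : ℕ → ℚ_[p] := fun j => (j : ℚ_[p]) * (p : ℚ_[p]) ^ (-n) with hc
  set t : ℕ → Set ℚ_[p] := fun j => (fun x => -(c j) + x) ⁻¹' B with ht
  have hmem : ∀ j x, x ∈ t j ↔ ‖x - c j‖ ≤ (p : ℝ) ^ (n - 1) := by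
    intro j x
    simp only [ht, Set.mem_preimage, hB, Set.mem_setOf_eq, neg_add_eq_sub]
  have hnormc : ∀ i j : ℕ, i < p → j < p → i ≠ j → ‖c i - c j‖ = (p : ℝ) ^ n := by
    intro i j hi hj hij
    have h1 : c i - c j = (((i : ℤ) - (j : ℤ) : ℤ) : ℚ_[p]) * (p : ℚ_[p]) ^ (-n) := by
      push_cast; ring
    have hdvd : ¬ ((p : ℤ) ∣ ((i : ℤ) - (j : ℤ))) := by
      intro h
      have := Int.eq_zero_of_abs_lt_dvd h (by rw [abs_lt]; constructor <;> omega)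
      omega
    have hone : ‖(((i : ℤ) - (j : ℤ) : ℤ) : ℚ_[p])‖ = 1 := by
      have hle := Padic.norm_int_le_one (p := p) ((i : ℤ) - (j : ℤ))
      have hlt := (Padic.norm_intCast_lt_one_iff (p := p) (k := (i : ℤ) - (j : ℤ))).not.2 hdvd
      push_neg at hlt
      linarith
    rw [h1, norm_mul, hone, one_mul, Padic.norm_p_zpow, neg_neg]
  have hdisj : (↑(Finset.range p) : Set ℕ).PairwiseDisjoint t := by
    intro i hi j hj hij
    simp only [Finset.coe_range, Set.mem_Iio] at hi hj
    refine Set.disjoint_left.2 fun x hxi hxj => ?_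
    have h1 := (hmem i x).1 hxi
    have h2 := (hmem j x).1 hxj
    have h3 : ‖c i - c j‖ ≤ (p : ℝ) ^ (n - 1) := by
      have : c i - c j = (x - c j) - (x - c i) := by ring
      rw [this]
      calc ‖(x - c j) - (x - c i)‖ ≤ max ‖x - c j‖ ‖-(x - c i)‖ := by
            simpa [sub_eq_add_neg] using Padic.nonarchimedean (x - c j) (-(x - c i))
        _ ≤ (p : ℝ) ^ (n - 1) := by rw [norm_neg]; exact max_le h2 h1
    rw [hnormc i j hi hj hij] at h3
    have : (p : ℝ) ^ (n - 1) < (p : ℝ) ^ n := zpow_lt_zpow_right₀ hp1 (by omega)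
    linarith
  have hunion : {x : ℚ_[p] | ‖x‖ ≤ (p : ℝ) ^ n} = ⋃ j ∈ Finset.range p, t j := by
    ext x
    simp only [Set.mem_setOf_eq, Set.mem_iUnion, Finset.mem_range, exists_prop]
    constructor
    · intro hx
      set y : ℚ_[p] := (p : ℚ_[p]) ^ n * x with hy
      have hy1 : ‖y‖ ≤ 1 := by
        rw [hy, norm_mul, Padic.norm_p_zpow]
        calc (p : ℝ) ^ (-n) * ‖x‖ ≤ (p : ℝ) ^ (-n) * (p : ℝ) ^ n :=
              mul_le_mul_of_nonneg_left hx (by positivity)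
          _ = 1 := by rw [← zpow_add₀ hp0]; simp
      set z : ℤ_[p] := ⟨y, hy1⟩ with hz
      refine ⟨z.appr 1, by simpa using z.appr_lt 1, ?_⟩
      rw [hmem]
      have hspec : ‖z - (z.appr 1 : ℤ_[p])‖ ≤ (p : ℝ) ^ (-1 : ℤ) :=
        ((z - (z.appr 1 : ℤ_[p])).norm_le_pow_iff_mem_span_pow 1).2 (by simpa using z.appr_spec 1)
      have hcoe : ((z - (z.appr 1 : ℤ_[p]) : ℤ_[p]) : ℚ_[p]) = y - (z.appr 1 : ℚ_[p]) := by
        push_cast [hz]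
        rfl
      rw [PadicInt.norm_def, hcoe] at hspec
      have hpy : (p : ℚ_[p]) ^ (-n) * y = x := by
        rw [hy, ← mul_assoc, ← zpow_add₀ hpQ]; simp
      have hxc : x - c (z.appr 1) = (p : ℚ_[p]) ^ (-n) * (y - (z.appr 1 : ℚ_[p])) := by
        rw [mul_sub, hpy]; simp only [hc]; ring
      rw [hxc, norm_mul, Padic.norm_p_zpow, neg_neg]
      calc (p : ℝ) ^ n * ‖y - (z.appr 1 : ℚ_[p])‖ ≤ (p : ℝ) ^ n * (p : ℝ) ^ (-1 : ℤ) :=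
            mul_le_mul_of_nonneg_left hspec (by positivity)
        _ = (p : ℝ) ^ (n - 1) := by rw [← zpow_add₀ hp0]; ring_nf
    · rintro ⟨j, hj, hx⟩
      rw [hmem] at hx
      have hcj : ‖c j‖ ≤ (p : ℝ) ^ n := by
        rw [hc, norm_mul, Padic.norm_p_zpow, neg_neg]
        have : ‖((j : ℤ) : ℚ_[p])‖ ≤ 1 := Padic.norm_int_le_one _
        calc ‖(j : ℚ_[p])‖ * (p : ℝ) ^ n ≤ 1 * (p : ℝ) ^ n := by
              refine mul_le_mul_of_nonneg_right ?_ (by positivity)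
              exact_mod_cast this
          _ = (p : ℝ) ^ n := one_mul _
      have : x = (x - c j) + c j := by ring
      rw [this]
      calc ‖(x - c j) + c j‖ ≤ max ‖x - c j‖ ‖c j‖ := Padic.nonarchimedean _ _
        _ ≤ (p : ℝ) ^ n := max_le
            (hx.trans (zpow_le_zpow_right₀ hp1.le (by omega))) hcj
  have htmeas : ∀ j ∈ Finset.range p, MeasurableSet (t j) := fun j _ =>
    (padicBall_measurableSet p _).preimage (measurable_const_add _)
  rw [hunion, measure_biUnion_finset hdisj htmeas]
  have : ∀ j ∈ Finset.range p, padicHaar p (t j) = padicHaar p B := fun j _ =>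
    measure_preimage_add _ _ _
  rw [Finset.sum_congr rfl this, Finset.sum_const, Finset.card_range, nsmul_eq_mul]

lemma padicHaar_ball (n : ℤ) :
    padicHaar p {x : ℚ_[p] | ‖x‖ ≤ (p : ℝ) ^ n} = ENNReal.ofReal ((p : ℝ) ^ n) := by
  have hp0 : (p : ℝ) ≠ 0 := hpR0 p
  have hkey : ∀ m : ℤ, (p : ℝ≥0∞) * ENNReal.ofReal ((p : ℝ) ^ m)
      = ENNReal.ofReal ((p : ℝ) ^ (m + 1)) := by
    intro m
    rw [← ENNReal.ofReal_natCast p, ← ENNReal.ofReal_mul (Nat.cast_nonneg p)]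
    congr 1
    rw [mul_comm, ← zpow_add_one₀ hp0]
  induction n using Int.induction_on with
  | zero =>
    have h0 : {x : ℚ_[p] | ‖x‖ ≤ (p : ℝ) ^ (0 : ℤ)} = (padicUnitBall p : Set ℚ_[p]) := by
      ext x; simp [padicUnitBall]; exact Iff.rfl
    rw [h0]
    simp [padicHaar, Measure.addHaarMeasure_self]
  | succ n ih =>
    rw [padicHaar_ball_succ, add_sub_cancel_right, ih, hkey]
  | pred n ih =>
    have hstep := padicHaar_ball_succ p (-n)
    rw [ih] at hstep
    have h2 : (p : ℝ≥0∞) * ENNReal.ofReal ((p : ℝ) ^ (-(n : ℤ) - 1))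
        = (p : ℝ≥0∞) * padicHaar p {x : ℚ_[p] | ‖x‖ ≤ (p : ℝ) ^ (-(n : ℤ) - 1)} := by
      rw [hkey, sub_add_cancel, hstep]
    exact ((ENNReal.mul_right_inj (by exact_mod_cast (Fact.out : p.Prime).ne_zero)
      (ENNReal.natCast_ne_top p)).1 h2).symm

lemma padicSphere_measurableSet (k : ℕ) :
    MeasurableSet {x : ℚ_[p] | ‖x‖ = (p : ℝ) ^ (k : ℤ)} :=
  measurable_norm (measurableSet_singleton _)

lemma padicHaar_sphere (k : ℕ) :
    padicHaar p {x : ℚ_[p] | ‖x‖ = (p : ℝ) ^ (k : ℤ)}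
      = ENNReal.ofReal ((p : ℝ) ^ (k : ℤ) - (p : ℝ) ^ ((k : ℤ) - 1)) := by
  have hp1 := hp1R p
  have hsub : {x : ℚ_[p] | ‖x‖ ≤ (p : ℝ) ^ ((k : ℤ) - 1)}
      ⊆ {x : ℚ_[p] | ‖x‖ ≤ (p : ℝ) ^ (k : ℤ)} := fun x hx =>
    le_trans hx (zpow_le_zpow_right₀ hp1.le (by omega))
  have heq : {x : ℚ_[p] | ‖x‖ = (p : ℝ) ^ (k : ℤ)}
      = {x : ℚ_[p] | ‖x‖ ≤ (p : ℝ) ^ (k : ℤ)} \ {x : ℚ_[p] | ‖x‖ ≤ (p : ℝ) ^ ((k : ℤ) - 1)} := by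
    ext x
    simp only [Set.mem_setOf_eq, Set.mem_diff, not_le]
    constructor
    · intro h
      rw [h]
      exact ⟨le_rfl, zpow_lt_zpow_right₀ hp1 (by omega)⟩
    · rintro ⟨h1, h2⟩
      have hx0 : x ≠ 0 := by
        rintro rfl
        rw [norm_zero] at h2
        have : (0:ℝ) ≤ (p : ℝ) ^ ((k : ℤ) - 1) := zpow_nonneg (by positivity) _
        linarith
      rw [Padic.norm_eq_zpow_neg_valuation hx0] at h1 h2 ⊢
      have hm1 : -x.valuation ≤ (k : ℤ) := (zpow_le_zpow_iff_right₀ hp1).1 h1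
      have hm2 : (k : ℤ) - 1 < -x.valuation := (zpow_lt_zpow_iff_right₀ hp1).1 h2
      congr 1
      omega
  rw [heq, measure_diff hsub (padicBall_measurableSet p _).nullMeasurableSet
      (by rw [padicHaar_ball]; exact ENNReal.ofReal_ne_top),
    padicHaar_ball, padicHaar_ball, ← ENNReal.ofReal_sub _ (zpow_nonneg (by positivity) _)]

lemma padicU_eq_iUnion :
    {x : ℚ_[p] | 1 ≤ ‖x‖} = ⋃ k : ℕ, {x : ℚ_[p] | ‖x‖ = (p : ℝ) ^ (k : ℤ)} := by
  have hp1 := hp1R p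
  ext x
  simp only [Set.mem_setOf_eq, Set.mem_iUnion]
  constructor
  · intro hx
    have hx0 : x ≠ 0 := by
      rintro rfl; rw [norm_zero] at hx; linarith
    have hval := Padic.norm_eq_zpow_neg_valuation hx0
    have h0 : (0 : ℤ) ≤ -x.valuation := by
      by_contra h
      push_neg at h
      rw [hval] at hx
      have h2 : (p : ℝ) ^ (-x.valuation) < (p : ℝ) ^ (0 : ℤ) := zpow_lt_zpow_right₀ hp1 h
      rw [zpow_zero] at h2
      linarith
    refine ⟨(-x.valuation).toNat, ?_⟩
    rw [hval]
    congr 1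
    omega
  · rintro ⟨k, hk⟩
    rw [hk]
    calc (1 : ℝ) = (p : ℝ) ^ (0 : ℤ) := by rw [zpow_zero]
      _ ≤ (p : ℝ) ^ (k : ℤ) := zpow_le_zpow_right₀ hp1.le (by positivity)

lemma padicSphere_pairwise :
    Pairwise (Function.onFun Disjoint fun k : ℕ => {x : ℚ_[p] | ‖x‖ = (p : ℝ) ^ (k : ℤ)}) := by
  have hp1 := hp1R p
  intro i j hij
  refine Set.disjoint_left.2 fun x hxi hxj => ?_
  rw [Set.mem_setOf_eq] at hxi hxj
  have h := hxi.symm.trans hxj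
  have h1 : (i : ℤ) ≤ j := (zpow_le_zpow_iff_right₀ hp1).1 h.le
  have h2 : (j : ℤ) ≤ i := (zpow_le_zpow_iff_right₀ hp1).1 h.ge
  exact hij (by omega)

lemma padic_rpow_integral (s : ℝ) (hs : 1 < s) :
    IntegrableOn (fun ξ : ℚ_[p] => ‖ξ‖ ^ (-s)) {ξ : ℚ_[p] | 1 ≤ ‖ξ‖} (padicHaar p) ∧
    ∫ ξ in {ξ : ℚ_[p] | 1 ≤ ‖ξ‖}, ‖ξ‖ ^ (-s) ∂(padicHaar p)
      = (1 - 1 / (p : ℝ)) * (1 - (p : ℝ) ^ (1 - s))⁻¹ := by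
  have hp1 := hp1R p
  have hp0 : (p : ℝ) ≠ 0 := hpR0 p
  set r : ℝ := (p : ℝ) ^ (1 - s) with hr
  have hr0 : 0 ≤ r := Real.rpow_nonneg (by positivity) _
  have hr1 : r < 1 := Real.rpow_lt_one_of_one_lt_of_neg hp1 (by linarith)
  have hc0 : (0:ℝ) ≤ 1 - 1 / (p : ℝ) := by
    have : 1 / (p : ℝ) ≤ 1 := by
      rw [div_le_one (by linarith)]; linarith
    linarith
  set f : ℚ_[p] → ℝ := fun ξ => ‖ξ‖ ^ (-s) with hf
  have hfm : Measurable f := measurable_norm.pow measurable_const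
  have hfnn : ∀ ξ, 0 ≤ f ξ := fun ξ => Real.rpow_nonneg (norm_nonneg _) _
  set Sph : ℕ → Set ℚ_[p] := fun k => {x : ℚ_[p] | ‖x‖ = (p : ℝ) ^ (k : ℤ)} with hSph
  have hSm : ∀ k, MeasurableSet (Sph k) := fun k => padicSphere_measurableSet p k
  have hak : ∀ k : ℕ, ((p : ℝ) ^ (k : ℤ)) ^ (-s) * ((p : ℝ) ^ (k : ℤ) - (p : ℝ) ^ ((k : ℤ) - 1))
      = (1 - 1 / (p : ℝ)) * r ^ k := by
    intro k
    have hpos : (0 : ℝ) < (p : ℝ) ^ (k : ℤ) := by positivity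
    have hsub : (p : ℝ) ^ (k : ℤ) - (p : ℝ) ^ ((k : ℤ) - 1)
        = (p : ℝ) ^ (k : ℤ) * (1 - 1 / (p : ℝ)) := by
      rw [zpow_sub_one₀ hp0]
      field_simp
    have hmain : ((p : ℝ) ^ (k : ℤ)) ^ (-s) * (p : ℝ) ^ (k : ℤ) = r ^ k := by
      calc ((p : ℝ) ^ (k : ℤ)) ^ (-s) * (p : ℝ) ^ (k : ℤ)
          = ((p : ℝ) ^ (k : ℤ)) ^ (-s) * ((p : ℝ) ^ (k : ℤ)) ^ (1 : ℝ) := by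
            rw [Real.rpow_one]
        _ = ((p : ℝ) ^ (k : ℤ)) ^ (1 - s) := by
            rw [← Real.rpow_add hpos]; ring_nf
        _ = ((p : ℝ) ^ (k : ℕ)) ^ (1 - s) := by rw [zpow_natCast]
        _ = ((p : ℝ) ^ ((k : ℕ) : ℝ)) ^ (1 - s) := by rw [Real.rpow_natCast]
        _ = (p : ℝ) ^ (((k : ℕ) : ℝ) * (1 - s)) := by
            rw [← Real.rpow_mul (by positivity)]
        _ = ((p : ℝ) ^ (1 - s)) ^ ((k : ℕ) : ℝ) := by
            rw [mul_comm, Real.rpow_mul (by positivity)]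
        _ = r ^ k := by rw [hr, Real.rpow_natCast]
    rw [hsub, ← mul_assoc, hmain, mul_comm]
  have hL : ∀ k : ℕ, ∫⁻ x in Sph k, ENNReal.ofReal (f x) ∂(padicHaar p)
      = ENNReal.ofReal ((1 - 1 / (p : ℝ)) * r ^ k) := by
    intro k
    have h1 : ∫⁻ x in Sph k, ENNReal.ofReal (f x) ∂(padicHaar p)
        = ∫⁻ _ in Sph k, ENNReal.ofReal (((p : ℝ) ^ (k : ℤ)) ^ (-s)) ∂(padicHaar p) := by
      refine setLIntegral_congr_fun (hSm k) (fun x hx => ?_)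
      rw [Set.mem_setOf_eq] at hx
      rw [hf]
      simp only
      rw [hx]
    rw [h1, setLIntegral_const, hSph]
    simp only
    rw [padicHaar_sphere,
      ← ENNReal.ofReal_mul (Real.rpow_nonneg (zpow_nonneg (by positivity) _) _), hak]
  have hLtot : ∫⁻ x in {ξ : ℚ_[p] | 1 ≤ ‖ξ‖}, ENNReal.ofReal (f x) ∂(padicHaar p)
      = ENNReal.ofReal ((1 - 1 / (p : ℝ)) * (1 - r)⁻¹) := by
    rw [padicU_eq_iUnion, lintegral_iUnion hSm (padicSphere_pairwise p)]
    calc ∑' k, ∫⁻ x in Sph k, ENNReal.ofReal (f x) ∂(padicHaar p)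
        = ∑' k : ℕ, ENNReal.ofReal ((1 - 1 / (p : ℝ)) * r ^ k) := tsum_congr hL
      _ = ENNReal.ofReal (∑' k : ℕ, (1 - 1 / (p : ℝ)) * r ^ k) :=
          (ENNReal.ofReal_tsum_of_nonneg (fun k => mul_nonneg hc0 (pow_nonneg hr0 k))
            ((summable_geometric_of_lt_one hr0 hr1).mul_left _)).symm
      _ = ENNReal.ofReal ((1 - 1 / (p : ℝ)) * (1 - r)⁻¹) := by
          rw [tsum_mul_left, tsum_geometric_of_lt_one hr0 hr1]
  have hInt : IntegrableOn f {ξ : ℚ_[p] | 1 ≤ ‖ξ‖} (padicHaar p) := by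
    refine ⟨hfm.aestronglyMeasurable, ?_⟩
    rw [hasFiniteIntegral_iff_norm]
    have : ∫⁻ x in {ξ : ℚ_[p] | 1 ≤ ‖ξ‖}, ENNReal.ofReal ‖f x‖ ∂(padicHaar p)
        = ∫⁻ x in {ξ : ℚ_[p] | 1 ≤ ‖ξ‖}, ENNReal.ofReal (f x) ∂(padicHaar p) :=
      lintegral_congr fun x => by rw [Real.norm_of_nonneg (hfnn x)]
    rw [this, hLtot]
    exact ENNReal.ofReal_lt_top
  refine ⟨hInt, ?_⟩
  rw [integral_eq_lintegral_of_nonneg_ae (Filter.Eventually.of_forall fun x => hfnn x)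
    hfm.aestronglyMeasurable.restrict]
  rw [hLtot, ENNReal.toReal_ofReal
    (mul_nonneg hc0 (inv_nonneg.2 (by linarith)))]

end Aux

theorem stmt8 (p : ℕ) [Fact p.Prime] (α : ℝ) (hα0 : 0 < α) (hα1 : α < 1)
    (τ : ℚ_[p]) (hτ0 : τ ≠ 0) (hτ : ‖τ‖ < 1) :
    ∫ ξ in {ξ : ℚ_[p] | 1 ≤ ‖ξ‖},
        ‖ξ‖ ^ (-α - 1) * (‖ξ + τ‖ ^ (α - 1) - ‖τ‖ ^ (α - 1)) ∂(padicHaar p)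
      = 1 - (1 - 1 / (p : ℝ)) * (1 / (1 - (p : ℝ) ^ (-α))) * ‖τ‖ ^ (α - 1) := by
  have hp1 := hp1R p
  have hUm : MeasurableSet {ξ : ℚ_[p] | 1 ≤ ‖ξ‖} :=
    measurableSet_le measurable_const measurable_norm
  set c : ℝ := ‖τ‖ ^ (α - 1) with hcdef
  obtain ⟨hInt2, hVal2⟩ := padic_rpow_integral p 2 (by norm_num)
  obtain ⟨hInt1, hVal1⟩ := padic_rpow_integral p (α + 1) (by linarith)
  have hEq : Set.EqOn (fun ξ : ℚ_[p] => ‖ξ‖ ^ (-α - 1) * (‖ξ + τ‖ ^ (α - 1) - ‖τ‖ ^ (α - 1)))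
      (fun ξ : ℚ_[p] => ‖ξ‖ ^ (-(2 : ℝ)) - c * ‖ξ‖ ^ (-(α + 1))) {ξ : ℚ_[p] | 1 ≤ ‖ξ‖} := by
    intro ξ hξ
    have h1 : (1 : ℝ) ≤ ‖ξ‖ := hξ
    have hξpos : (0 : ℝ) < ‖ξ‖ := lt_of_lt_of_le one_pos h1
    have hne : ‖ξ + τ‖ = ‖ξ‖ := by
      rw [Padic.add_eq_max_of_ne (lt_of_lt_of_le hτ h1).ne']
      exact max_eq_left (le_trans hτ.le h1)
    simp only
    rw [hne, mul_sub, ← Real.rpow_add hξpos]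
    have he1 : -α - 1 + (α - 1) = -(2 : ℝ) := by ring
    have he2 : -α - 1 = -(α + 1) := by ring
    rw [he1, he2, mul_comm (‖ξ‖ ^ (-(α + 1))) c]
  rw [setIntegral_congr_fun hUm hEq,
    integral_sub hInt2 (hInt1.const_mul c), integral_const_mul, hVal2, hVal1]
  have h2 : (1 - 1 / (p : ℝ)) * (1 - (p : ℝ) ^ (1 - (2 : ℝ)))⁻¹ = 1 := by
    have : (p : ℝ) ^ (1 - (2 : ℝ)) = (p : ℝ)⁻¹ := by
      norm_num
      exact Real.rpow_neg_one _
    rw [this]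
    have hne : 1 - (p : ℝ)⁻¹ ≠ 0 := by
      have : (p : ℝ)⁻¹ < 1 := by
        rw [inv_lt_one_iff₀]; right; exact hp1
      linarith
    rw [one_div]
    field_simp
    exact div_self (by linarith)
  have h3 : (p : ℝ) ^ (1 - (α + 1)) = (p : ℝ) ^ (-α) := by
    congr 1; ring
  rw [h2, h3, one_div]
  ring
end

section
/- Let p be a prime. The integral of |r|_p^{-2}·log|1 + r|_p over {r ∈ ℚ_p : |r|_p ≥ 1} with respect to the normalized Haar measure equals 0. -/
open MeasureTheory Topology Filter

namespace Stmt14Aux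

variable (p : ℕ) [hp : Fact p.Prime]

instance : (padicHaar p).IsAddHaarMeasure := by
  unfold padicHaar; infer_instance

/-- The closed ball of radius `p ^ (-z)`. -/
def Bb (z : ℤ) : Set ℚ_[p] := {x : ℚ_[p] | ‖x‖ ≤ (p : ℝ) ^ (-z)}

variable {p}

lemma one_lt_p : (1 : ℝ) < p := by exact_mod_cast hp.out.one_lt

lemma p_pos : (0 : ℝ) < p := lt_trans one_pos one_lt_p

lemma p_ne_zero : (p : ℝ) ≠ 0 := p_pos.ne'

lemma isClosed_Bb (z : ℤ) : IsClosed (Bb p z) :=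
  isClosed_le continuous_norm continuous_const

lemma measurableSet_Bb (z : ℤ) : MeasurableSet (Bb p z) :=
  (isClosed_Bb z).measurableSet

lemma isCompact_Bb (z : ℤ) : IsCompact (Bb p z) := by
  have h : Bb p z = Metric.closedBall 0 ((p : ℝ) ^ (-z)) := by
    ext x; simp [Bb, dist_eq_norm]
  rw [h]; exact isCompact_closedBall _ _

lemma Bb_mono (z : ℤ) : Bb p (z + 1) ⊆ Bb p z := by
  intro x hx
  have hx' : ‖x‖ ≤ (p:ℝ) ^ (-(z+1)) := hx
  exact le_trans hx' (zpow_le_zpow_right₀ one_lt_p.le (by omega))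

lemma meas_Bb_ne_top (z : ℤ) : padicHaar p (Bb p z) ≠ ⊤ :=
  (isCompact_Bb z).measure_lt_top.ne

lemma meas_Bb_zero : padicHaar p (Bb p 0) = 1 := by
  have h : Bb p 0 = (padicUnitBall p : Set ℚ_[p]) := by
    ext x; simp [Bb, padicUnitBall]; exact Iff.rfl
  rw [h, padicHaar, Measure.addHaarMeasure_self]

/-- Translates of the ball of radius `p^{-(z+1)}` by `i * p^z`. -/
def Tt (z : ℤ) (i : ℕ) : Set ℚ_[p] :=
  {x : ℚ_[p] | ‖x - (i : ℚ_[p]) * (p : ℚ_[p]) ^ z‖ ≤ (p : ℝ) ^ (-(z + 1))}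

lemma norm_p_zpow' (z : ℤ) : ‖((p : ℚ_[p]) ^ z)‖ = (p : ℝ) ^ (-z) :=
  Padic.norm_p_zpow z

lemma norm_natCast_sub_eq_one {i j : ℕ} (hi : i < p) (hj : j < p) (hij : i ≠ j) :
    ‖(i : ℚ_[p]) - (j : ℚ_[p])‖ = 1 := by
  have h1 := Padic.norm_int_le_one (p := p) ((i : ℤ) - (j : ℤ))
  have h2 : ¬ ‖(((i : ℤ) - (j : ℤ) : ℤ) : ℚ_[p])‖ < 1 := by
    rw [Padic.norm_intCast_lt_one_iff]
    intro hdvd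
    have habs : |(i : ℤ) - (j : ℤ)| < p := by
      rw [abs_sub_lt_iff]; omega
    have hpos : (0:ℤ) < |(i : ℤ) - (j : ℤ)| := abs_pos.mpr (by omega)
    have := Int.le_of_dvd hpos ((dvd_abs _ _).mpr hdvd)
    omega
  have h3 := le_antisymm h1 (not_lt.mp h2)
  push_cast at h3
  exact h3

lemma Tt_cover (z : ℤ) : Bb p z = ⋃ i ∈ Finset.range p, Tt z i := by
  ext x
  constructor
  · intro hx
    have hx' : ‖x‖ ≤ (p : ℝ) ^ (-z) := hx
    have hcne : ((p : ℚ_[p]) ^ z) ≠ 0 :=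
      zpow_ne_zero _ (Nat.cast_ne_zero.mpr hp.out.ne_zero)
    have hunorm : ‖x / (p : ℚ_[p]) ^ z‖ ≤ 1 := by
      rw [norm_div, norm_p_zpow', div_le_one (zpow_pos p_pos _)]
      exact hx'
    set U : ℤ_[p] := ⟨x / (p : ℚ_[p]) ^ z, hunorm⟩ with hU
    have hilt : U.appr 1 < p := by
      have := U.appr_lt 1
      simpa using this
    have hspec : U - ((U.appr 1 : ℕ) : ℤ_[p]) ∈ Ideal.span {(p : ℤ_[p]) ^ 1} := by
      simpa using U.appr_spec 1
    have hnormUi : ‖U - ((U.appr 1 : ℕ) : ℤ_[p])‖ ≤ (p : ℝ) ^ (-(1:ℕ) : ℤ) :=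
      (PadicInt.norm_le_pow_iff_mem_span_pow _ 1).mpr hspec
    have hco : ((U - ((U.appr 1 : ℕ) : ℤ_[p]) : ℤ_[p]) : ℚ_[p])
        = x / (p : ℚ_[p]) ^ z - ((U.appr 1 : ℕ) : ℚ_[p]) := by
      rfl
    have hnormui : ‖x / (p : ℚ_[p]) ^ z - ((U.appr 1 : ℕ) : ℚ_[p])‖ ≤ (p : ℝ) ^ (-1 : ℤ) := by
      rw [show ((-1 : ℤ)) = (-(1:ℕ) : ℤ) by norm_num, ← hco, ← PadicInt.norm_def]
      exact hnormUi
    refine Set.mem_biUnion (Finset.mem_range.mpr hilt) ?_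
    show ‖x - ((U.appr 1 : ℕ) : ℚ_[p]) * (p : ℚ_[p]) ^ z‖ ≤ (p : ℝ) ^ (-(z + 1))
    have hxic : x - ((U.appr 1 : ℕ) : ℚ_[p]) * (p : ℚ_[p]) ^ z
        = (p : ℚ_[p]) ^ z * (x / (p : ℚ_[p]) ^ z - ((U.appr 1 : ℕ) : ℚ_[p])) := by
      field_simp
    rw [hxic, norm_mul, norm_p_zpow']
    calc (p : ℝ) ^ (-z) * ‖x / (p : ℚ_[p]) ^ z - ((U.appr 1 : ℕ) : ℚ_[p])‖
        ≤ (p : ℝ) ^ (-z) * (p : ℝ) ^ (-1 : ℤ) :=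
          mul_le_mul_of_nonneg_left hnormui (zpow_pos p_pos _).le
      _ = (p : ℝ) ^ (-(z + 1)) := by
          rw [← zpow_add₀ p_ne_zero]; ring_nf
  · intro hx
    obtain ⟨i, hi, hxi⟩ := Set.mem_iUnion₂.mp hx
    have hxi' : ‖x - (i : ℚ_[p]) * (p : ℚ_[p]) ^ z‖ ≤ (p : ℝ) ^ (-(z + 1)) := hxi
    have h1 : ‖(i : ℚ_[p]) * (p : ℚ_[p]) ^ z‖ ≤ (p : ℝ) ^ (-z) := by
      rw [norm_mul, norm_p_zpow']
      have h2 : ‖(i : ℚ_[p])‖ ≤ 1 := by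
        have := Padic.norm_int_le_one (p := p) (i : ℤ)
        simpa using this
      nlinarith [zpow_pos (p_pos (p := p)) (-z)]
    have hxe : x = (x - (i : ℚ_[p]) * (p : ℚ_[p]) ^ z) + (i : ℚ_[p]) * (p : ℚ_[p]) ^ z := by
      ring
    show ‖x‖ ≤ (p : ℝ) ^ (-z)
    rw [hxe]
    refine le_trans (Padic.nonarchimedean _ _) (max_le (le_trans hxi' ?_) h1)
    exact zpow_le_zpow_right₀ one_lt_p.le (by omega)

lemma Tt_disjoint (z : ℤ) : (↑(Finset.range p) : Set ℕ).PairwiseDisjoint (Tt (p := p) z) := by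
  intro i hi j hj hij
  simp only [Finset.coe_range, Set.mem_Iio] at hi hj
  refine Set.disjoint_left.mpr fun x hxi hxj => ?_
  have hxi' : ‖x - (i : ℚ_[p]) * (p : ℚ_[p]) ^ z‖ ≤ (p : ℝ) ^ (-(z + 1)) := hxi
  have hxj' : ‖x - (j : ℚ_[p]) * (p : ℚ_[p]) ^ z‖ ≤ (p : ℝ) ^ (-(z + 1)) := hxj
  have hij' : (i : ℚ_[p]) * (p : ℚ_[p]) ^ z - (j : ℚ_[p]) * (p : ℚ_[p]) ^ z
      = (x - (j : ℚ_[p]) * (p : ℚ_[p]) ^ z) - (x - (i : ℚ_[p]) * (p : ℚ_[p]) ^ z) := by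
    ring
  have hnorm1 : ‖(i : ℚ_[p]) * (p : ℚ_[p]) ^ z - (j : ℚ_[p]) * (p : ℚ_[p]) ^ z‖
      ≤ (p : ℝ) ^ (-(z + 1)) := by
    rw [hij', sub_eq_add_neg]
    refine le_trans (Padic.nonarchimedean _ _) (max_le hxj' ?_)
    rwa [norm_neg]
  have hnorm2 : ‖(i : ℚ_[p]) * (p : ℚ_[p]) ^ z - (j : ℚ_[p]) * (p : ℚ_[p]) ^ z‖
      = (p : ℝ) ^ (-z) := by
    rw [← sub_mul, norm_mul, norm_p_zpow', norm_natCast_sub_eq_one hi hj hij, one_mul]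
  rw [hnorm2] at hnorm1
  have hlt : (p : ℝ) ^ (-(z+1)) < (p : ℝ) ^ (-z) := zpow_lt_zpow_right₀ one_lt_p (by omega)
  linarith

lemma measurableSet_Tt (z : ℤ) (i : ℕ) : MeasurableSet (Tt (p := p) z i) :=
  (isClosed_le (continuous_norm.comp (continuous_id.sub continuous_const))
    continuous_const).measurableSet

lemma meas_Tt (z : ℤ) (i : ℕ) : padicHaar p (Tt z i) = padicHaar p (Bb p (z + 1)) := by
  have h : Tt (p := p) z i = (fun y : ℚ_[p] => (-(↑i * (p : ℚ_[p]) ^ z)) + y) ⁻¹' Bb p (z + 1) := by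
    ext x
    simp only [Set.mem_preimage, Bb, Tt, Set.mem_setOf_eq]
    rw [neg_add_eq_sub]
  rw [h, measure_preimage_add]

lemma meas_Bb_succ (z : ℤ) :
    padicHaar p (Bb p z) = p * padicHaar p (Bb p (z + 1)) := by
  rw [Tt_cover z, measure_biUnion_finset (Tt_disjoint z) (fun i _ => measurableSet_Tt z i)]
  simp only [meas_Tt]
  rw [Finset.sum_const, Finset.card_range, nsmul_eq_mul]


lemma ofReal_p : (p : ENNReal) = ENNReal.ofReal (p : ℝ) := by
  rw [ENNReal.ofReal_natCast]

lemma meas_Bb_nat (n : ℕ) : padicHaar p (Bb p n) = ENNReal.ofReal ((p : ℝ) ^ (-(n:ℤ))) := by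
  induction n with
  | zero => simpa using meas_Bb_zero
  | succ n ih =>
      have hrec := meas_Bb_succ (p := p) (n : ℤ)
      rw [ih] at hrec
      have hne : (p : ENNReal) ≠ 0 := by
        simp [hp.out.ne_zero]
      have hnt : (p : ENNReal) ≠ ⊤ := ENNReal.natCast_ne_top p
      have h := (ENNReal.eq_div_iff hne hnt).mpr hrec.symm
      rw [show ((n : ℤ) + 1) = ((n + 1 : ℕ) : ℤ) by push_cast; ring] at h
      rw [h, ofReal_p, ← ENNReal.ofReal_div_of_pos p_pos]
      congr 1
      rw [div_eq_mul_inv, ← zpow_neg_one, ← zpow_add₀ p_ne_zero]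
      congr 1
      push_cast
      ring

lemma meas_Bb_neg_nat (n : ℕ) :
    padicHaar p (Bb p (-(n:ℤ))) = ENNReal.ofReal ((p : ℝ) ^ (n:ℤ)) := by
  induction n with
  | zero => simpa using meas_Bb_zero
  | succ n ih =>
      have hrec := meas_Bb_succ (p := p) (-((n:ℤ) + 1))
      rw [show (-((n:ℤ) + 1) + 1) = -(n:ℤ) by ring] at hrec
      rw [show (-(((n:ℕ) + 1 : ℕ) :ℤ)) = -((n:ℤ)+1) by push_cast; ring, hrec, ih, ofReal_p,
        ← ENNReal.ofReal_mul p_pos.le]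
      congr 1
      rw [show (((n + 1 :ℕ)) : ℤ) = (n:ℤ) + 1 by push_cast; ring]
      rw [zpow_add₀ p_ne_zero, zpow_one]
      ring

lemma meas_Bb (z : ℤ) : padicHaar p (Bb p z) = ENNReal.ofReal ((p : ℝ) ^ (-z)) := by
  obtain ⟨n, rfl | rfl⟩ := z.eq_nat_or_neg
  · exact meas_Bb_nat n
  · rw [meas_Bb_neg_nat n, neg_neg]

/-- The sphere of radius `p ^ (-z)`. -/
def Sp (z : ℤ) : Set ℚ_[p] := {x : ℚ_[p] | ‖x‖ = (p : ℝ) ^ (-z)}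

lemma Sp_eq (z : ℤ) : Sp (p := p) z = Bb p z \ Bb p (z + 1) := by
  ext x
  simp only [Sp, Bb, Set.mem_setOf_eq, Set.mem_diff]
  constructor
  · intro h
    refine ⟨le_of_eq h, fun hle => ?_⟩
    have : (p : ℝ) ^ (-(z+1)) < (p : ℝ) ^ (-z) := zpow_lt_zpow_right₀ one_lt_p (by omega)
    rw [← h] at this
    exact absurd hle (not_le.mpr this)
  · rintro ⟨h1, h2⟩
    have h3 := (Padic.norm_le_pow_iff_norm_lt_pow_add_one x (-(z+1))).not.mp h2
    rw [show (-(z+1) + 1) = -z by ring] at h3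
    push_neg at h3
    exact le_antisymm h1 h3

lemma measurableSet_Sp (z : ℤ) : MeasurableSet (Sp (p := p) z) := by
  rw [Sp_eq]
  exact (measurableSet_Bb z).diff (measurableSet_Bb (z + 1))

lemma meas_Sp (z : ℤ) :
    padicHaar p (Sp (p := p) z) = ENNReal.ofReal ((p : ℝ) ^ (-z) - (p : ℝ) ^ (-(z+1))) := by
  rw [Sp_eq, measure_diff (Bb_mono z) (measurableSet_Bb (z+1)).nullMeasurableSet
    (meas_Bb_ne_top (z+1)), meas_Bb, meas_Bb,
    ← ENNReal.ofReal_sub _ (zpow_pos (p_pos (p := p)) _).le]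

lemma meas_Sp_toReal (z : ℤ) :
    (padicHaar p (Sp (p := p) z)).toReal = (p : ℝ) ^ (-z) - (p : ℝ) ^ (-(z+1)) := by
  rw [meas_Sp, ENNReal.toReal_ofReal]
  have : (p : ℝ) ^ (-(z+1)) < (p : ℝ) ^ (-z) := zpow_lt_zpow_right₀ one_lt_p (by omega)
  linarith


/-- Sphere of radius `p^(n+1)` (big spheres). -/
def SA (n : ℕ) : Set ℚ_[p] := Sp (p := p) (-((n:ℤ)+1))

/-- Translated sphere `{r | ‖1+r‖ = p^{-(n+1)}}`. -/
def SC (n : ℕ) : Set ℚ_[p] := (fun x : ℚ_[p] => 1 + x) ⁻¹' Sp (p := p) ((n:ℤ)+1)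

lemma zpow_coe_succ (n : ℕ) : (p:ℝ) ^ ((n:ℤ)+1) = (p:ℝ) ^ (n+1 : ℕ) := by
  rw [show ((n:ℤ)+1) = ((n+1 : ℕ):ℤ) by push_cast; ring, zpow_natCast]

lemma mem_SA {n : ℕ} {x : ℚ_[p]} (hx : x ∈ SA (p := p) n) : ‖x‖ = (p:ℝ) ^ (n+1 : ℕ) := by
  have h : ‖x‖ = (p:ℝ) ^ (-(-((n:ℤ)+1))) := hx
  rwa [neg_neg, zpow_coe_succ] at h

lemma mem_SA_of {n : ℕ} {x : ℚ_[p]} (hx : ‖x‖ = (p:ℝ) ^ (n+1 : ℕ)) : x ∈ SA (p := p) n := by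
  show ‖x‖ = (p:ℝ) ^ (-(-((n:ℤ)+1)))
  rwa [neg_neg, zpow_coe_succ]

lemma mem_SC {n : ℕ} {x : ℚ_[p]} (hx : x ∈ SC (p := p) n) :
    ‖1 + x‖ = ((p:ℝ) ^ (n+1 : ℕ))⁻¹ := by
  have h : ‖1 + x‖ = (p:ℝ) ^ (-((n:ℤ)+1)) := hx
  rwa [zpow_neg, zpow_coe_succ] at h

lemma measurableSet_SA (n : ℕ) : MeasurableSet (SA (p := p) n) := measurableSet_Sp _

lemma measurableSet_SC (n : ℕ) : MeasurableSet (SC (p := p) n) :=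
  ((continuous_const.add continuous_id).measurable) (measurableSet_Sp _)

lemma meas_SA_ne_top (n : ℕ) : padicHaar p (SA (p := p) n) ≠ ⊤ := by
  rw [SA, meas_Sp]; exact ENNReal.ofReal_ne_top

lemma meas_SC_eq (n : ℕ) : padicHaar p (SC (p := p) n) = padicHaar p (Sp (p := p) ((n:ℤ)+1)) :=
  measure_preimage_add (padicHaar p) 1 _

lemma meas_SC_ne_top (n : ℕ) : padicHaar p (SC (p := p) n) ≠ ⊤ := by
  rw [meas_SC_eq, meas_Sp]; exact ENNReal.ofReal_ne_top

lemma meas_SA_toReal (n : ℕ) :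
    (padicHaar p (SA (p := p) n)).toReal = (p:ℝ) ^ (n+1 : ℕ) - (p:ℝ) ^ (n : ℕ) := by
  rw [SA, meas_Sp_toReal, neg_neg, zpow_coe_succ]
  congr 1
  rw [show (-(-((n:ℤ)+1)+1)) = (n:ℤ) by ring, zpow_natCast]

lemma meas_SC_toReal (n : ℕ) :
    (padicHaar p (SC (p := p) n)).toReal
      = ((p:ℝ) ^ (n+1 : ℕ))⁻¹ - ((p:ℝ) ^ (n+2 : ℕ))⁻¹ := by
  rw [meas_SC_eq, meas_Sp_toReal]
  rw [show (-((n:ℤ)+1)) = -(((n+1:ℕ)):ℤ) by push_cast; ring,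
    show (-(((n:ℤ)+1)+1)) = -(((n+2:ℕ)):ℤ) by push_cast; ring,
    zpow_neg, zpow_neg, zpow_natCast, zpow_natCast]

/-- The value of the integrand on `SA n`. -/
noncomputable def cA (n : ℕ) : ℝ :=
  (((p:ℝ) ^ (n+1 : ℕ))⁻¹) ^ 2 * (((n+1 : ℕ) : ℝ) * Real.log p)

/-- The value of the integrand on `SC n`. -/
noncomputable def cC (n : ℕ) : ℝ := -(((n+1 : ℕ) : ℝ) * Real.log p)

lemma rpow_neg_two_eq {y : ℝ} (hy : 0 < y) : y ^ (-2 : ℝ) = (y⁻¹) ^ 2 := by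
  have h : y ^ (-2 : ℝ) = (y ^ ((2:ℕ) : ℝ))⁻¹ := by
    rw [← Real.rpow_neg hy.le]; norm_num
  rw [h, Real.rpow_natCast, ← inv_pow]

lemma log_p_nonneg : 0 ≤ Real.log p := Real.log_nonneg one_lt_p.le

lemma cA_nonneg (n : ℕ) : 0 ≤ cA (p := p) n := by
  refine mul_nonneg (pow_nonneg (inv_nonneg.mpr (pow_nonneg p_pos.le _)) _) ?_
  exact mul_nonneg (Nat.cast_nonneg _) log_p_nonneg

lemma f_eq_on_SA (n : ℕ) :
    Set.EqOn (fun r : ℚ_[p] => ‖r‖ ^ (-2 : ℝ) * Real.log ‖1 + r‖)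
      (fun _ => cA (p := p) n) (SA (p := p) n) := by
  intro x hx
  have hx' := mem_SA hx
  have hgt : (1:ℝ) < ‖x‖ := by
    rw [hx']
    exact one_lt_pow₀ one_lt_p (Nat.succ_ne_zero n)
  have hne : ‖(1:ℚ_[p])‖ ≠ ‖x‖ := by rw [norm_one]; exact ne_of_lt hgt
  have hadd : ‖1 + x‖ = ‖x‖ := by
    rw [Padic.add_eq_max_of_ne hne, norm_one, max_eq_right hgt.le]
  show ‖x‖ ^ (-2:ℝ) * Real.log ‖1 + x‖ = cA (p := p) n
  rw [hadd, hx', rpow_neg_two_eq (pow_pos p_pos _), Real.log_pow, cA]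

lemma SC_norm_one {n : ℕ} {x : ℚ_[p]} (hx : x ∈ SC (p := p) n) : ‖x‖ = 1 := by
  have h1 := mem_SC hx
  have hlt : ‖1 + x‖ < 1 := by
    rw [h1]
    rw [inv_lt_one_iff₀]
    right
    exact one_lt_pow₀ one_lt_p (Nat.succ_ne_zero n)
  have hne : ‖(1 + x : ℚ_[p])‖ ≠ ‖(-1 : ℚ_[p])‖ := by
    rw [norm_neg, norm_one]
    exact ne_of_lt hlt
  have hx' : x = (1 + x) + (-1) := by ring
  rw [hx', Padic.add_eq_max_of_ne hne, norm_neg, norm_one]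
  exact max_eq_right hlt.le

lemma f_eq_on_SC (n : ℕ) :
    Set.EqOn (fun r : ℚ_[p] => ‖r‖ ^ (-2 : ℝ) * Real.log ‖1 + r‖)
      (fun _ => cC (p := p) n) (SC (p := p) n) := by
  intro x hx
  have h1 := mem_SC hx
  show ‖x‖ ^ (-2:ℝ) * Real.log ‖1 + x‖ = cC (p := p) n
  rw [SC_norm_one hx, Real.one_rpow, h1, Real.log_inv, Real.log_pow, cC]
  push_cast
  ring

lemma term_cancel (n : ℕ) :
    (padicHaar p (SA (p := p) n)).toReal * cA (p := p) n
      + (padicHaar p (SC (p := p) n)).toReal * cC (p := p) n = 0 := by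
  rw [meas_SA_toReal, meas_SC_toReal, cA, cC]
  have hpn : ((p:ℝ) ^ (n : ℕ)) ≠ 0 := pow_ne_zero _ p_ne_zero
  have hpn1 : ((p:ℝ) ^ (n+1 : ℕ)) ≠ 0 := pow_ne_zero _ p_ne_zero
  have hpn2 : ((p:ℝ) ^ (n+2 : ℕ)) ≠ 0 := pow_ne_zero _ p_ne_zero
  field_simp
  ring


lemma integral_SA (n : ℕ) :
    ∫ x in SA (p := p) n, ‖x‖ ^ (-2 : ℝ) * Real.log ‖1 + x‖ ∂(padicHaar p)
      = (padicHaar p (SA (p := p) n)).toReal * cA (p := p) n := by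
  rw [setIntegral_congr_fun (measurableSet_SA n) (f_eq_on_SA n), setIntegral_const, smul_eq_mul]
  rfl

lemma integral_SC (n : ℕ) :
    ∫ x in SC (p := p) n, ‖x‖ ^ (-2 : ℝ) * Real.log ‖1 + x‖ ∂(padicHaar p)
      = (padicHaar p (SC (p := p) n)).toReal * cC (p := p) n := by
  rw [setIntegral_congr_fun (measurableSet_SC n) (f_eq_on_SC n), setIntegral_const, smul_eq_mul]
  rfl

lemma integral_norm_SA (n : ℕ) :
    ∫ x in SA (p := p) n, ‖‖x‖ ^ (-2 : ℝ) * Real.log ‖1 + x‖‖ ∂(padicHaar p)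
      = (padicHaar p (SA (p := p) n)).toReal * cA (p := p) n := by
  have heq : Set.EqOn (fun r : ℚ_[p] => ‖‖r‖ ^ (-2 : ℝ) * Real.log ‖1 + r‖‖)
      (fun _ => cA (p := p) n) (SA (p := p) n) := by
    intro x hx
    have := f_eq_on_SA n hx
    simp only at this ⊢
    rw [this, Real.norm_eq_abs, abs_of_nonneg (cA_nonneg n)]
  rw [setIntegral_congr_fun (measurableSet_SA n) heq, setIntegral_const, smul_eq_mul]
  rfl

lemma integral_norm_SC (n : ℕ) :
    ∫ x in SC (p := p) n, ‖‖x‖ ^ (-2 : ℝ) * Real.log ‖1 + x‖‖ ∂(padicHaar p)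
      = (padicHaar p (SC (p := p) n)).toReal * (((n+1 : ℕ) : ℝ) * Real.log p) := by
  have heq : Set.EqOn (fun r : ℚ_[p] => ‖‖r‖ ^ (-2 : ℝ) * Real.log ‖1 + r‖‖)
      (fun _ => ((n+1 : ℕ) : ℝ) * Real.log p) (SC (p := p) n) := by
    intro x hx
    have := f_eq_on_SC n hx
    simp only at this ⊢
    rw [this, cC, Real.norm_eq_abs, abs_neg, abs_of_nonneg]
    exact mul_nonneg (Nat.cast_nonneg _) log_p_nonneg
  rw [setIntegral_congr_fun (measurableSet_SC n) heq, setIntegral_const, smul_eq_mul]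
  rfl

/-- Dominating summable sequence. -/
noncomputable def aux (n : ℕ) : ℝ := ((n:ℝ)+1) * ((p:ℝ)⁻¹) ^ (n+1) * Real.log p

lemma summable_aux : Summable (aux (p := p)) := by
  have hr : ‖(p:ℝ)⁻¹‖ < 1 := by
    rw [Real.norm_eq_abs, abs_of_pos (inv_pos.mpr p_pos)]
    exact inv_lt_one_of_one_lt₀ one_lt_p
  have h0 : Summable (fun n : ℕ => (n:ℝ) * ((p:ℝ)⁻¹) ^ n * Real.log p) := by
    have h1 := summable_pow_mul_geometric_of_norm_lt_one (R := ℝ) 1 hr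
    have h2 := h1.mul_right (Real.log p)
    refine h2.congr fun n => ?_
    simp [pow_one]
  have h3 := (summable_nat_add_iff 1).mpr h0
  refine h3.congr fun n => ?_
  rw [aux]
  push_cast
  ring

lemma meas_SA_toReal_le (n : ℕ) :
    (padicHaar p (SA (p := p) n)).toReal * cA (p := p) n ≤ aux (p := p) n := by
  rw [meas_SA_toReal, cA, aux]
  have h1 : (0:ℝ) < (p:ℝ) ^ (n+1 : ℕ) := pow_pos p_pos _
  have h2 : (0:ℝ) < (p:ℝ) ^ (n : ℕ) := pow_pos p_pos _
  have hlog := log_p_nonneg (p := p)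
  have key : ((p:ℝ) ^ (n+1 : ℕ) - (p:ℝ) ^ (n : ℕ)) * (((p:ℝ) ^ (n+1 : ℕ))⁻¹) ^ 2
      ≤ ((p:ℝ)⁻¹) ^ (n+1) := by
    have hle : ((p:ℝ) ^ (n+1 : ℕ) - (p:ℝ) ^ (n : ℕ)) ≤ (p:ℝ) ^ (n+1 : ℕ) := by linarith
    calc ((p:ℝ) ^ (n+1 : ℕ) - (p:ℝ) ^ (n : ℕ)) * (((p:ℝ) ^ (n+1 : ℕ))⁻¹) ^ 2
        ≤ (p:ℝ) ^ (n+1 : ℕ) * (((p:ℝ) ^ (n+1 : ℕ))⁻¹) ^ 2 := by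
          apply mul_le_mul_of_nonneg_right hle
          positivity
      _ = ((p:ℝ) ^ (n+1 : ℕ))⁻¹ := by
          field_simp
      _ = ((p:ℝ)⁻¹) ^ (n+1) := by rw [inv_pow]
  calc ((p:ℝ) ^ (n+1 : ℕ) - (p:ℝ) ^ (n : ℕ)) * ((((p:ℝ) ^ (n+1 : ℕ))⁻¹) ^ 2
        * (((n+1 : ℕ) : ℝ) * Real.log p))
      = (((p:ℝ) ^ (n+1 : ℕ) - (p:ℝ) ^ (n : ℕ)) * (((p:ℝ) ^ (n+1 : ℕ))⁻¹) ^ 2)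
        * (((n+1 : ℕ) : ℝ) * Real.log p) := by ring
    _ ≤ ((p:ℝ)⁻¹) ^ (n+1) * (((n+1 : ℕ) : ℝ) * Real.log p) := by
        apply mul_le_mul_of_nonneg_right key
        exact mul_nonneg (Nat.cast_nonneg _) hlog
    _ = ((n:ℝ)+1) * ((p:ℝ)⁻¹) ^ (n+1) * Real.log p := by push_cast; ring

lemma meas_SC_toReal_le (n : ℕ) :
    (padicHaar p (SC (p := p) n)).toReal * (((n+1 : ℕ) : ℝ) * Real.log p)
      ≤ aux (p := p) n := by
  rw [meas_SC_toReal, aux]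
  have h1 : (0:ℝ) < (p:ℝ) ^ (n+1 : ℕ) := pow_pos p_pos _
  have h2 : (0:ℝ) < (p:ℝ) ^ (n+2 : ℕ) := pow_pos p_pos _
  have hlog := log_p_nonneg (p := p)
  have key : ((p:ℝ) ^ (n+1 : ℕ))⁻¹ - ((p:ℝ) ^ (n+2 : ℕ))⁻¹ ≤ ((p:ℝ)⁻¹) ^ (n+1) := by
    rw [inv_pow]
    have : (0:ℝ) < ((p:ℝ) ^ (n+2 : ℕ))⁻¹ := by positivity
    linarith
  calc (((p:ℝ) ^ (n+1 : ℕ))⁻¹ - ((p:ℝ) ^ (n+2 : ℕ))⁻¹) * (((n+1 : ℕ) : ℝ) * Real.log p)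
      ≤ ((p:ℝ)⁻¹) ^ (n+1) * (((n+1 : ℕ) : ℝ) * Real.log p) := by
        apply mul_le_mul_of_nonneg_right key
        exact mul_nonneg (Nat.cast_nonneg _) hlog
    _ = ((n:ℝ)+1) * ((p:ℝ)⁻¹) ^ (n+1) * Real.log p := by push_cast; ring

lemma integrableOn_f_SA (n : ℕ) :
    IntegrableOn (fun r : ℚ_[p] => ‖r‖ ^ (-2 : ℝ) * Real.log ‖1 + r‖)
      (SA (p := p) n) (padicHaar p) :=
  (integrableOn_const (meas_SA_ne_top n)).congr_fun
    (f_eq_on_SA n).symm (measurableSet_SA n)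

lemma integrableOn_f_SC (n : ℕ) :
    IntegrableOn (fun r : ℚ_[p] => ‖r‖ ^ (-2 : ℝ) * Real.log ‖1 + r‖)
      (SC (p := p) n) (padicHaar p) :=
  (integrableOn_const (meas_SC_ne_top n)).congr_fun
    (f_eq_on_SC n).symm (measurableSet_SC n)

lemma integrableOn_f_iUnion_SA :
    IntegrableOn (fun r : ℚ_[p] => ‖r‖ ^ (-2 : ℝ) * Real.log ‖1 + r‖)
      (⋃ n, SA (p := p) n) (padicHaar p) := by
  refine integrableOn_iUnion_of_summable_integral_norm
    (fun n => integrableOn_f_SA n) ?_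
  refine Summable.of_nonneg_of_le (fun n => ?_) (fun n => ?_) (summable_aux (p := p))
  · exact integral_nonneg fun x => norm_nonneg _
  · rw [integral_norm_SA]
    exact meas_SA_toReal_le n

lemma integrableOn_f_iUnion_SC :
    IntegrableOn (fun r : ℚ_[p] => ‖r‖ ^ (-2 : ℝ) * Real.log ‖1 + r‖)
      (⋃ n, SC (p := p) n) (padicHaar p) := by
  refine integrableOn_iUnion_of_summable_integral_norm
    (fun n => integrableOn_f_SC n) ?_
  refine Summable.of_nonneg_of_le (fun n => ?_) (fun n => ?_) (summable_aux (p := p))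
  · exact integral_nonneg fun x => norm_nonneg _
  · rw [integral_norm_SC]
    exact meas_SC_toReal_le n

lemma SA_pairwise_disjoint : Pairwise (Function.onFun Disjoint (SA (p := p))) := by
  intro i j hij
  refine Set.disjoint_left.mpr fun x h1 h2 => hij ?_
  have e1 := mem_SA h1
  have e2 := mem_SA h2
  rw [e1] at e2
  have := pow_right_injective₀ p_pos one_lt_p.ne' e2
  omega

lemma SC_pairwise_disjoint : Pairwise (Function.onFun Disjoint (SC (p := p))) := by
  intro i j hij
  refine Set.disjoint_left.mpr fun x h1 h2 => hij ?_
  have e1 := mem_SC h1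
  have e2 := mem_SC h2
  rw [e1] at e2
  have e3 := inv_injective e2
  have := pow_right_injective₀ p_pos one_lt_p.ne' e3
  omega

lemma iUnion_SA_eq : (⋃ n, SA (p := p) n) = {r : ℚ_[p] | 1 < ‖r‖} := by
  ext r
  simp only [Set.mem_iUnion, Set.mem_setOf_eq]
  constructor
  · rintro ⟨n, hn⟩
    rw [mem_SA hn]
    exact one_lt_pow₀ one_lt_p (Nat.succ_ne_zero n)
  · intro hr
    have hr0 : r ≠ 0 := by
      intro h; rw [h, norm_zero] at hr; linarith
    have hv := Padic.norm_eq_zpow_neg_valuation hr0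
    have hvpos : 0 < -r.valuation := by
      by_contra hcon
      push_neg at hcon
      have : (p:ℝ) ^ (-r.valuation) ≤ (p:ℝ) ^ (0:ℤ) :=
        zpow_le_zpow_right₀ one_lt_p.le hcon
      rw [zpow_zero] at this
      rw [hv] at hr
      linarith
    refine ⟨(-r.valuation - 1).toNat, mem_SA_of ?_⟩
    rw [hv, ← zpow_coe_succ]
    congr 1
    omega

lemma iUnion_SC_subset : (⋃ n, SC (p := p) n) ⊆ {r : ℚ_[p] | ‖r‖ = 1} := by
  rintro r hr
  obtain ⟨n, hn⟩ := Set.mem_iUnion.mp hr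
  exact SC_norm_one hn

lemma f_zero_of_not_mem {r : ℚ_[p]} (h1 : ‖r‖ = 1) (h2 : r ∉ ⋃ n, SC (p := p) n) :
    ‖r‖ ^ (-2 : ℝ) * Real.log ‖1 + r‖ = 0 := by
  suffices hlog : Real.log ‖1 + r‖ = 0 by rw [hlog, mul_zero]
  by_cases h0 : (1 + r : ℚ_[p]) = 0
  · rw [h0, norm_zero, Real.log_zero]
  · have hle : ‖1 + r‖ ≤ 1 := by
      calc ‖1 + r‖ ≤ max ‖(1:ℚ_[p])‖ ‖r‖ := Padic.nonarchimedean _ _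
        _ = 1 := by rw [norm_one, h1, max_self]
    have hv := Padic.norm_eq_zpow_neg_valuation h0
    rcases lt_trichotomy (1 + r).valuation 0 with hlt | heq | hgt
    · exfalso
      have hgt1 : (1:ℝ) < (p:ℝ) ^ (-(1 + r).valuation) := by
        have : ((p:ℝ)) ^ (0:ℤ) < (p:ℝ) ^ (-(1 + r).valuation) :=
          zpow_lt_zpow_right₀ one_lt_p (by omega)
        rwa [zpow_zero] at this
      rw [hv] at hle
      linarith
    · rw [hv, heq, neg_zero, zpow_zero, Real.log_one]
    · exfalso
      apply h2
      refine Set.mem_iUnion.mpr ⟨((1 + r).valuation - 1).toNat, ?_⟩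
      show ‖1 + r‖ = (p:ℝ) ^ (-(((((1 + r).valuation - 1).toNat : ℕ):ℤ) + 1))
      rw [hv]
      congr 1
      omega

end Stmt14Aux

open Stmt14Aux in
theorem stmt14 (p : ℕ) [Fact p.Prime] :
    ∫ r in {r : ℚ_[p] | 1 ≤ ‖r‖}, ‖r‖ ^ (-2 : ℝ) * Real.log ‖1 + r‖ ∂(padicHaar p) = 0 := by
  set μ := padicHaar p with hμ
  set f : ℚ_[p] → ℝ := fun r => ‖r‖ ^ (-2 : ℝ) * Real.log ‖1 + r‖ with hf
  set A : Set ℚ_[p] := ⋃ n, SA (p := p) n with hA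
  set U : Set ℚ_[p] := ⋃ n, SC (p := p) n with hU
  set C : Set ℚ_[p] := {r : ℚ_[p] | ‖r‖ = 1} with hC
  have hmeasA : MeasurableSet A := MeasurableSet.iUnion fun n => measurableSet_SA n
  have hmeasU : MeasurableSet U := MeasurableSet.iUnion fun n => measurableSet_SC n
  have hmeasC : MeasurableSet C := (isClosed_eq continuous_norm continuous_const).measurableSet
  have hUC : U ⊆ C := iUnion_SC_subset
  have hCU : (C \ U) ∪ U = C := Set.diff_union_of_subset hUC
  have hD : {r : ℚ_[p] | 1 ≤ ‖r‖} = A ∪ C := by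
    rw [hA, iUnion_SA_eq]
    ext r
    simp only [Set.mem_setOf_eq, Set.mem_union, hC]
    constructor
    · intro h
      rcases lt_or_eq_of_le h with h' | h'
      · exact Or.inl h'
      · exact Or.inr h'.symm
    · rintro (h | h)
      · exact le_of_lt h
      · exact le_of_eq h.symm
  have hIA : IntegrableOn f A μ := integrableOn_f_iUnion_SA
  have hIU : IntegrableOn f U μ := integrableOn_f_iUnion_SC
  have hEq0 : Set.EqOn f (fun _ => (0:ℝ)) (C \ U) := by
    rintro r ⟨h1, h2⟩
    exact f_zero_of_not_mem h1 h2
  have hI0 : IntegrableOn f (C \ U) μ :=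
    ((integrableOn_const_iff (C := (0:ℝ))).mpr (Or.inl (by simp))).congr_fun hEq0.symm (hmeasC.diff hmeasU)
  have hIC : IntegrableOn f C μ := by
    rw [← hCU]
    exact hI0.union hIU
  have hdisjAC : Disjoint A C := by
    rw [hA, iUnion_SA_eq]
    refine Set.disjoint_left.mpr fun r h1 h2 => ?_
    have h2' : ‖r‖ = 1 := h2
    have h1' : 1 < ‖r‖ := h1
    rw [h2'] at h1'
    exact lt_irrefl _ h1' 
  have hsplit1 : ∫ r in {r : ℚ_[p] | 1 ≤ ‖r‖}, f r ∂μ = (∫ r in A, f r ∂μ) + ∫ r in C, f r ∂μ := by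
    rw [hD]
    exact setIntegral_union hdisjAC hmeasC hIA hIC
  have hsplit2 : ∫ r in C, f r ∂μ = (∫ r in C \ U, f r ∂μ) + ∫ r in U, f r ∂μ := by
    conv_lhs => rw [← hCU]
    exact setIntegral_union disjoint_sdiff_self_left hmeasU hI0 hIU
  have hzero : ∫ r in C \ U, f r ∂μ = 0 := by
    rw [setIntegral_congr_fun (hmeasC.diff hmeasU) hEq0, integral_zero]
  have hsumA : HasSum (fun n => ∫ r in SA (p := p) n, f r ∂μ) (∫ r in A, f r ∂μ) :=
    hasSum_integral_iUnion (fun n => measurableSet_SA n) SA_pairwise_disjoint hIA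
  have hsumU : HasSum (fun n => ∫ r in SC (p := p) n, f r ∂μ) (∫ r in U, f r ∂μ) :=
    hasSum_integral_iUnion (fun n => measurableSet_SC n) SC_pairwise_disjoint hIU
  have hsum : HasSum (fun n => (∫ r in SA (p := p) n, f r ∂μ) + ∫ r in SC (p := p) n, f r ∂μ)
      ((∫ r in A, f r ∂μ) + ∫ r in U, f r ∂μ) := hsumA.add hsumU
  have hterm : (fun n => (∫ r in SA (p := p) n, f r ∂μ) + ∫ r in SC (p := p) n, f r ∂μ)
      = fun _ => (0:ℝ) := by
    funext n
    rw [hμ, hf]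
    rw [integral_SA n, integral_SC n]
    exact term_cancel n
  rw [hterm] at hsum
  have hAU : (∫ r in A, f r ∂μ) + ∫ r in U, f r ∂μ = 0 := hsum.unique hasSum_zero
  rw [hsplit1, hsplit2, hzero]
  linarith
end

section
/- Let p be a prime and τ ∈ ℚ_p nonzero with |τ|_p < 1. Then the integral of |ξ|_p^{-2}·(log|ξ + τ|_p − log|τ|_p) over {ξ ∈ ℚ_p : |ξ|_p ≥ 1} with respect to the normalized Haar measure equals (log p)/(p − 1) − log|τ|_p. -/
open MeasureTheory Topology Filter

section Aux

variable (p : ℕ) [Fact p.Prime]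

instance : (padicHaar p).IsAddLeftInvariant := by
  unfold padicHaar; infer_instance

lemma p_one_lt : (1:ℝ) < p := by exact_mod_cast (Fact.out : p.Prime).one_lt
lemma p_pos : (0:ℝ) < p := lt_trans one_pos (p_one_lt p)
lemma p_ne : (p:ℝ) ≠ 0 := (p_pos p).ne'
lemma pQ_ne : (p:ℚ_[p]) ≠ 0 := by
  exact_mod_cast (Nat.cast_ne_zero (R := ℚ_[p])).2 (Fact.out : p.Prime).ne_zero

/-- Closed ball of radius `p^m`. -/
def pBall (m : ℤ) : Set ℚ_[p] := {x : ℚ_[p] | ‖x‖ ≤ (p:ℝ)^m}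

lemma measurable_pBall (m : ℤ) : MeasurableSet (pBall p m) :=
  measurableSet_le measurable_norm measurable_const

lemma pBall_mono {m k : ℤ} (h : m ≤ k) : pBall p m ⊆ pBall p k := by
  intro x hx
  exact le_trans hx (zpow_le_zpow_right₀ (p_one_lt p).le h)

/-- decomposition of a ball into `p` cosets of the next smaller ball -/
lemma pBall_eq_biUnion (m : ℤ) :
    pBall p m = ⋃ a ∈ Finset.range p,
      (fun x : ℚ_[p] => (-(a * (p:ℚ_[p])^(-m))) + x) ⁻¹' pBall p (m-1) := by
  ext x
  simp only [Set.mem_iUnion, Set.mem_preimage, Finset.mem_range, pBall, Set.mem_setOf_eq]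
  constructor
  · intro hx
    -- y = x * p^m has norm ≤ 1
    have hy : ‖x * (p:ℚ_[p])^m‖ ≤ 1 := by
      rw [norm_mul, Padic.norm_p_zpow]
      calc ‖x‖ * (p:ℝ)^(-m) ≤ (p:ℝ)^m * (p:ℝ)^(-m) := by
            apply mul_le_mul_of_nonneg_right hx (zpow_nonneg (p_pos p).le _)
        _ = 1 := by
            rw [← zpow_add₀ (p_ne p), add_neg_cancel, zpow_zero]
    set y : ℤ_[p] := ⟨x * (p:ℚ_[p])^m, hy⟩ with hydef
    refine ⟨y.appr 1, by simpa using y.appr_lt 1, ?_⟩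
    have hspec := y.appr_spec 1 -- y - appr ∈ span {p^1}
    have hnorm : ‖y - (y.appr 1 : ℤ_[p])‖ ≤ (p:ℝ)^(-(1:ℕ):ℤ) :=
      (PadicInt.norm_le_pow_iff_mem_span_pow _ 1).2 hspec
    have hnormQ : ‖(y : ℚ_[p]) - ((y.appr 1 : ℕ) : ℚ_[p])‖ ≤ (p:ℝ)⁻¹ := by
      have := hnorm
      rw [← PadicInt.padic_norm_e_of_padicInt] at this
      push_cast at this ⊢
      simpa [zpow_neg] using this
    have hpp : (p:ℚ_[p])^m * (p:ℚ_[p])^(-m) = 1 := by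
      rw [← zpow_add₀ (pQ_ne p), add_neg_cancel, zpow_zero]
    have hx' : -(((y.appr 1 : ℕ):ℚ_[p]) * (p:ℚ_[p])^(-m)) + x
        = ((y:ℚ_[p]) - ((y.appr 1 : ℕ):ℚ_[p])) * (p:ℚ_[p])^(-m) := by
      have hxy : (y : ℚ_[p]) = x * (p:ℚ_[p])^m := rfl
      rw [hxy, sub_mul, mul_assoc, hpp, mul_one]; ring
    rw [hx', norm_mul, Padic.norm_p_zpow]
    calc ‖(y:ℚ_[p]) - ((y.appr 1 : ℕ):ℚ_[p])‖ * (p:ℝ)^(-(-m))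
        ≤ (p:ℝ)⁻¹ * (p:ℝ)^m := by
          rw [neg_neg]
          exact mul_le_mul_of_nonneg_right hnormQ (zpow_nonneg (p_pos p).le _)
      _ = (p:ℝ)^(m-1) := by
          rw [zpow_sub₀ (p_ne p), zpow_one, div_eq_mul_inv, mul_comm]
  · rintro ⟨a, _, ha⟩
    have h1 : ‖(-(((a:ℕ):ℚ_[p]) * (p:ℚ_[p])^(-m)))‖ ≤ (p:ℝ)^m := by
      rw [norm_neg, norm_mul, Padic.norm_p_zpow, neg_neg]
      calc ‖((a:ℕ):ℚ_[p])‖ * (p:ℝ)^m ≤ 1 * (p:ℝ)^m := by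
            apply mul_le_mul_of_nonneg_right _ (zpow_nonneg (p_pos p).le _)
            exact_mod_cast Padic.norm_int_le_one ((a:ℤ))
        _ = (p:ℝ)^m := one_mul _
    have h2 : (p:ℝ)^(m-1) ≤ (p:ℝ)^m :=
      zpow_le_zpow_right₀ (p_one_lt p).le (by omega)
    have key := Padic.nonarchimedean
      ((-(((a:ℕ):ℚ_[p]) * (p:ℚ_[p])^(-m))) + x) (((a:ℕ):ℚ_[p]) * (p:ℚ_[p])^(-m))
    have hxx : (-(((a:ℕ):ℚ_[p]) * (p:ℚ_[p])^(-m))) + x + (((a:ℕ):ℚ_[p]) * (p:ℚ_[p])^(-m)) = x := by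
      ring
    rw [hxx] at key
    rw [norm_neg] at h1
    exact key.trans (max_le (le_trans ha h2) h1)

lemma pBall_disjoint (m : ℤ) : Set.PairwiseDisjoint (↑(Finset.range p))
    (fun a : ℕ => (fun x : ℚ_[p] => (-(a * (p:ℚ_[p])^(-m))) + x) ⁻¹' pBall p (m-1)) := by
  intro a ha b hb hab
  simp only [Finset.coe_range, Set.mem_Iio] at ha hb
  rw [Function.onFun, Set.disjoint_left]
  intro x hxa hxb
  simp only [Set.mem_preimage, pBall, Set.mem_setOf_eq] at hxa hxb
  -- ‖(a-b) * p^{-m}‖ ≤ p^{m-1}, contradiction with = p^m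
  have key := Padic.nonarchimedean
    ((-((a:ℚ_[p]) * (p:ℚ_[p])^(-m))) + x) (-((-((b:ℚ_[p]) * (p:ℚ_[p])^(-m))) + x))
  have hxx : (-((a:ℚ_[p]) * (p:ℚ_[p])^(-m))) + x + (-((-((b:ℚ_[p]) * (p:ℚ_[p])^(-m))) + x))
      = ((b:ℚ_[p]) - a) * (p:ℚ_[p])^(-m) := by ring
  rw [hxx, norm_neg] at key
  have hle : ‖((b:ℚ_[p]) - a) * (p:ℚ_[p])^(-m)‖ ≤ (p:ℝ)^(m-1) :=
    key.trans (max_le hxa hxb)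
  have hba : ((b:ℚ_[p]) - a) = (((b:ℤ) - a : ℤ) : ℚ_[p]) := by push_cast; ring
  have hndvd : ¬ ((p:ℤ) ∣ ((b:ℤ) - a)) := by
    intro hdvd
    have h0 : ((b:ℤ) - a) = 0 := Int.eq_zero_of_dvd_of_natAbs_lt_natAbs hdvd (by omega)
    omega
  have hnorm1 : ‖(((b:ℤ) - a : ℤ) : ℚ_[p])‖ = 1 := by
    have hle1 : ‖(((b:ℤ) - a : ℤ) : ℚ_[p])‖ ≤ 1 := Padic.norm_int_le_one _
    have := (Padic.norm_intCast_lt_one_iff (k := (b:ℤ) - a)).not.2 hndvd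
    push_neg at this
    exact le_antisymm hle1 this
  rw [hba, norm_mul, hnorm1, one_mul, Padic.norm_p_zpow, neg_neg] at hle
  have : (p:ℝ)^(m-1) < (p:ℝ)^m := zpow_lt_zpow_right₀ (p_one_lt p) (by omega)
  linarith

lemma meas_pBall_step (m : ℤ) :
    padicHaar p (pBall p m) = p * padicHaar p (pBall p (m-1)) := by
  rw [pBall_eq_biUnion p m,
    measure_biUnion_finset (pBall_disjoint p m)
      (fun a _ => (measurable_pBall p (m-1)).preimage (measurable_const_add _))]
  simp only [measure_preimage_add]
  rw [Finset.sum_const, Finset.card_range, nsmul_eq_mul]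

lemma meas_pBall : ∀ m : ℤ, padicHaar p (pBall p m) = ENNReal.ofReal ((p:ℝ)^m) := by
  have hp0 : ((p : ENNReal)) ≠ 0 := by
    simp only [ne_eq, Nat.cast_eq_zero]
    exact (Fact.out : p.Prime).ne_zero
  have hpt : ((p : ENNReal)) ≠ ⊤ := ENNReal.natCast_ne_top p
  have hbase : padicHaar p (pBall p 0) = 1 := by
    have : pBall p 0 = (padicUnitBall p : Set ℚ_[p]) := by
      ext x; simp [pBall, padicUnitBall]; exact Iff.rfl
    rw [this, padicHaar, Measure.addHaarMeasure_self]
  have hcast : ∀ m : ℤ, (p : ENNReal) * ENNReal.ofReal ((p:ℝ)^(m-1)) = ENNReal.ofReal ((p:ℝ)^m) := by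
    intro m
    rw [← ENNReal.ofReal_natCast, ← ENNReal.ofReal_mul (Nat.cast_nonneg p),
      ← zpow_one_add₀ (p_ne p)]
    norm_num
  intro m
  induction m using Int.induction_on with
  | zero => rw [hbase]; simp
  | succ n ih =>
      have := meas_pBall_step p (n+1)
      simp only [add_sub_cancel_right] at this
      rw [this, ih]
      have := hcast ((n:ℤ)+1)
      simpa using this
  | pred n ih =>
      have hstep := meas_pBall_step p (-n)
      rw [ih] at hstep
      have h2 : (p : ENNReal) * ENNReal.ofReal ((p:ℝ)^(-(n:ℤ)-1)) = ENNReal.ofReal ((p:ℝ)^(-(n:ℤ))) := by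
        have := hcast (-(n:ℤ))
        simpa using this
      have e1 : padicHaar p (pBall p (-(n:ℤ)-1)) = ENNReal.ofReal ((p:ℝ)^(-(n:ℤ))) / p :=
        (ENNReal.eq_div_iff hp0 hpt).2 hstep.symm
      have e2 : ENNReal.ofReal ((p:ℝ)^(-(n:ℤ)-1)) = ENNReal.ofReal ((p:ℝ)^(-(n:ℤ))) / p :=
        (ENNReal.eq_div_iff hp0 hpt).2 h2
      rw [e1, e2]

lemma meas_pSphere (n : ℕ) :
    padicHaar p {x : ℚ_[p] | ‖x‖ = (p:ℝ)^(n:ℤ)}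
      = ENNReal.ofReal ((p:ℝ)^(n:ℤ) - (p:ℝ)^((n:ℤ)-1)) := by
  have hq1 : (1:ℝ) < p := p_one_lt p
  have hset : {x : ℚ_[p] | ‖x‖ = (p:ℝ)^(n:ℤ)} = pBall p n \ pBall p ((n:ℤ)-1) := by
    ext x
    simp only [Set.mem_setOf_eq, Set.mem_diff, pBall, not_le]
    constructor
    · intro h
      exact ⟨le_of_eq h, h ▸ zpow_lt_zpow_right₀ hq1 (by omega)⟩
    · rintro ⟨h1, h2⟩
      have hx0 : x ≠ 0 := by
        intro h
        rw [h, norm_zero] at h2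
        exact absurd h2 (not_lt.2 (zpow_nonneg (by positivity) _))
      rw [Padic.norm_eq_zpow_neg_valuation hx0] at h1 h2 ⊢
      congr 1
      have e1 := (zpow_lt_zpow_iff_right₀ hq1).1 h2
      have e2 : -x.valuation ≤ (n:ℤ) := by
        by_contra h
        push_neg at h
        exact absurd ((zpow_lt_zpow_iff_right₀ hq1).2 h) (not_lt.2 h1)
      omega
  rw [hset, measure_diff (pBall_mono p (by omega))
    (measurable_pBall p _).nullMeasurableSet
    (by rw [meas_pBall]; exact ENNReal.ofReal_ne_top),
    meas_pBall, meas_pBall, ENNReal.ofReal_sub _ (zpow_nonneg (by positivity) _)]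

end Aux


theorem stmt16 (p : ℕ) [Fact p.Prime] (τ : ℚ_[p]) (hτ0 : τ ≠ 0) (hτ : ‖τ‖ < 1) :
    ∫ ξ in {ξ : ℚ_[p] | 1 ≤ ‖ξ‖},
        ‖ξ‖ ^ (-2 : ℝ) * (Real.log ‖ξ + τ‖ - Real.log ‖τ‖) ∂(padicHaar p)
      = Real.log p / ((p : ℝ) - 1) - Real.log ‖τ‖ := by
  have hq1 : (1:ℝ) < p := p_one_lt p
  have hq0 : (0:ℝ) < p := p_pos p
  set q : ℝ := (p:ℝ) with hqdef
  set L : ℝ := Real.log p with hLdef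
  set M : ℝ := Real.log ‖τ‖ with hMdef
  have hM0 : M ≤ 0 := Real.log_nonpos (norm_nonneg τ) hτ.le
  have hL0 : 0 ≤ L := Real.log_nonneg hq1.le
  set S : ℕ → Set ℚ_[p] := fun n => {x : ℚ_[p] | ‖x‖ = q^(n:ℤ)} with hSdef
  have hSm : ∀ n, MeasurableSet (S n) := by
    intro n
    have : S n = (fun x : ℚ_[p] => ‖x‖) ⁻¹' {q^(n:ℤ)} := by
      ext x; simp [hSdef]
    rw [this]
    exact measurable_norm (measurableSet_singleton _)
  have hdisj : Pairwise (Function.onFun Disjoint S) := by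
    intro a b hab
    rw [Function.onFun, Set.disjoint_left]
    intro x hxa hxb
    simp only [hSdef, Set.mem_setOf_eq] at hxa hxb
    rw [hxa] at hxb
    exact hab (by exact_mod_cast (zpow_right_strictMono₀ hq1).injective hxb)
  have hUnion : {ξ : ℚ_[p] | 1 ≤ ‖ξ‖} = ⋃ n, S n := by
    ext x
    simp only [Set.mem_setOf_eq, Set.mem_iUnion, hSdef]
    constructor
    · intro hx
      have hx0 : x ≠ 0 := by rintro rfl; norm_num at hx
      have hv := Padic.norm_eq_zpow_neg_valuation hx0
      have hnn : (0:ℤ) ≤ -x.valuation := by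
        by_contra h
        push_neg at h
        have h2 : q^(-x.valuation) < q^(0:ℤ) := zpow_lt_zpow_right₀ hq1 h
        rw [zpow_zero] at h2
        rw [hv] at hx
        exact absurd hx (not_le.2 h2)
      refine ⟨(-x.valuation).toNat, ?_⟩
      rw [hv]
      congr 1
      omega
    · rintro ⟨n, hn⟩
      rw [hn]
      exact one_le_zpow₀ hq1.le (Int.natCast_nonneg n)
  have hnorm_add : ∀ n : ℕ, ∀ ξ ∈ S n, ‖ξ + τ‖ = ‖ξ‖ := by
    intro n ξ hξ
    simp only [hSdef, Set.mem_setOf_eq] at hξ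
    have h1 : 1 ≤ ‖ξ‖ := by
      rw [hξ]; exact one_le_zpow₀ hq1.le (Int.natCast_nonneg n)
    have hne : ‖ξ‖ ≠ ‖τ‖ := (lt_of_lt_of_le hτ h1).ne'
    rw [Padic.add_eq_max_of_ne hne, max_eq_left (le_trans hτ.le h1)]
  set c : ℕ → ℝ := fun n => (q^(n:ℤ))^(-2:ℝ) * ((n:ℝ)*L - M) with hcdef
  have hc0 : ∀ n, 0 ≤ c n := by
    intro n
    apply mul_nonneg (Real.rpow_nonneg (zpow_nonneg hq0.le _) _)
    have : (0:ℝ) ≤ (n:ℝ) * L := mul_nonneg (Nat.cast_nonneg n) hL0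
    linarith
  have hfc : ∀ n : ℕ, ∀ ξ ∈ S n,
      ‖ξ‖ ^ (-2 : ℝ) * (Real.log ‖ξ + τ‖ - Real.log ‖τ‖) = c n := by
    intro n ξ hξ
    have hadd := hnorm_add n ξ hξ
    simp only [hSdef, Set.mem_setOf_eq] at hξ
    rw [hadd, hξ, Real.log_zpow]
    push_cast
    rfl
  have hmeas : Measurable (fun ξ : ℚ_[p] =>
      ‖ξ‖ ^ (-2 : ℝ) * (Real.log ‖ξ + τ‖ - Real.log ‖τ‖)) := by
    apply Measurable.mul
    · fun_prop
    · exact (Real.measurable_log.comp (measurable_id.add_const τ).norm).sub measurable_const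
  have hμS : ∀ n : ℕ, padicHaar p (S n) = ENNReal.ofReal (q^(n:ℤ) - q^((n:ℤ)-1)) := by
    intro n
    exact meas_pSphere p n
  have hpos : 0 ≤ᵐ[(padicHaar p).restrict (⋃ n, S n)]
      fun ξ : ℚ_[p] => ‖ξ‖ ^ (-2 : ℝ) * (Real.log ‖ξ + τ‖ - Real.log ‖τ‖) := by
    filter_upwards [ae_restrict_mem (MeasurableSet.iUnion hSm)] with ξ hξ
    obtain ⟨n, hn⟩ := Set.mem_iUnion.1 hξ
    rw [hfc n ξ hn]
    exact hc0 n
  rw [hUnion, integral_eq_lintegral_of_nonneg_ae hpos hmeas.aestronglyMeasurable]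
  have hlin : ∫⁻ ξ in ⋃ n, S n,
      ENNReal.ofReal (‖ξ‖ ^ (-2 : ℝ) * (Real.log ‖ξ + τ‖ - Real.log ‖τ‖)) ∂(padicHaar p)
      = ∑' n : ℕ, ENNReal.ofReal (c n) * padicHaar p (S n) := by
    rw [lintegral_iUnion hSm hdisj]
    apply tsum_congr
    intro n
    rw [setLIntegral_congr_fun (hSm n)
      (fun x hx => by rw [hfc n x hx]), setLIntegral_const]
  rw [hlin, ENNReal.tsum_toReal_eq
    (fun n => ENNReal.mul_ne_top ENNReal.ofReal_ne_top
      (by rw [hμS n]; exact ENNReal.ofReal_ne_top))]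
  have hterm : ∀ n : ℕ, (ENNReal.ofReal (c n) * padicHaar p (S n)).toReal
      = (1 - q⁻¹) * (L * ((n:ℝ) * (q⁻¹)^n) - M * (q⁻¹)^n) := by
    intro n
    rw [hμS n, ENNReal.toReal_mul, ENNReal.toReal_ofReal (hc0 n),
      ENNReal.toReal_ofReal
        (sub_nonneg.2 (zpow_le_zpow_right₀ hq1.le (by omega)))]
    -- algebraic identity
    have hQ : (0:ℝ) < q^n := by positivity
    have e1 : q^(n:ℤ) = q^n := zpow_natCast q n
    have e2 : q^((n:ℤ)-1) = q^n / q := by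
      rw [zpow_sub₀ hq0.ne', zpow_natCast, zpow_one]
    have e3 : ((q^n : ℝ))^(-2:ℝ) = ((q^n)^2)⁻¹ := by
      rw [show (-2:ℝ) = -((2:ℕ):ℝ) by norm_num, Real.rpow_neg hQ.le, Real.rpow_natCast]
    simp only [hcdef, e1, e2, e3, inv_pow]
    field_simp
  rw [tsum_congr hterm]
  have hr0 : (0:ℝ) ≤ q⁻¹ := by positivity
  have hr1 : q⁻¹ < 1 := inv_lt_one_of_one_lt₀ hq1
  have hrnorm : ‖q⁻¹‖ < 1 := by rwa [Real.norm_eq_abs, abs_of_nonneg hr0]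
  have s1 : Summable (fun n : ℕ => (n:ℝ) * (q⁻¹)^n) :=
    (hasSum_coe_mul_geometric_of_norm_lt_one hrnorm).summable
  have s2 : Summable (fun n : ℕ => (q⁻¹)^n) :=
    summable_geometric_of_lt_one hr0 hr1
  rw [tsum_mul_left, Summable.tsum_sub (s1.mul_left L) (s2.mul_left M),
    tsum_mul_left, tsum_mul_left,
    tsum_coe_mul_geometric_of_norm_lt_one hrnorm,
    tsum_geometric_of_lt_one hr0 hr1]
  have h1 : (1:ℝ) - q⁻¹ ≠ 0 := by
    have : q⁻¹ < 1 := hr1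
    linarith
  have h2 : q - 1 ≠ 0 := by linarith
  field_simp
end

section
/- Let p be a prime. Define R₁ : ℚ_p → ℝ by R₁(τ) = p/(p+1) − (p(p−1)/((p+1)·log p))·log|τ|_p for 0 ≠ |τ|_p < 1 and R₁(τ) = 0 for |τ|_p ≥ 1. Then R₁(τ) > 0 whenever 0 < |τ|_p < 1, and the integral of R₁ over ℚ_p with respect to the normalized Haar measure equals 1. -/
open MeasureTheory Topology Filter
open scoped ENNReal Pointwise

set_option maxHeartbeats 1000000
namespace Stmt17Aux

variable (p : ℕ) [Fact p.Prime]

def Bset (n : ℕ) : Set ℚ_[p] := {x | ‖x‖ ≤ (p : ℝ) ^ (-(n : ℤ))}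

variable {p}

lemma hp1R : (1 : ℝ) < p := by exact_mod_cast (Fact.out : p.Prime).one_lt

lemma measurableSet_Bset (n : ℕ) : MeasurableSet (Bset p n) :=
  (isClosed_le continuous_norm continuous_const).measurableSet

lemma Bset_cover (n : ℕ) :
    Bset p n = ⋃ j : Fin p,
      (fun y => ((j : ℕ) : ℚ_[p]) * (p : ℚ_[p]) ^ (n : ℤ) + y) '' Bset p (n + 1) := by
  have hp1 : (1 : ℝ) < p := hp1R
  have hp0 : (0 : ℝ) < p := by linarith
  have hpQ : ((p : ℚ_[p])) ≠ 0 := by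
    exact_mod_cast (Fact.out : p.Prime).ne_zero
  ext x
  simp only [Set.mem_iUnion, Set.mem_image, Bset, Set.mem_setOf_eq]
  constructor
  · intro hx
    have hz : ‖x * ((p : ℚ_[p]) ^ (-(n : ℤ)))‖ ≤ 1 := by
      rw [norm_mul, Padic.norm_p_zpow, neg_neg]
      calc ‖x‖ * (p : ℝ) ^ (n : ℤ) ≤ (p : ℝ) ^ (-(n : ℤ)) * (p : ℝ) ^ (n : ℤ) := by
            gcongr
          _ = 1 := by rw [← zpow_add₀ (ne_of_gt hp0), neg_add_cancel, zpow_zero]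
    set z : ℤ_[p] := ⟨x * ((p : ℚ_[p]) ^ (-(n : ℤ))), hz⟩ with hzdef
    obtain ⟨c, hc⟩ := Ideal.mem_span_singleton'.mp (z.appr_spec 1)
    refine ⟨⟨z.appr 1, by simpa using z.appr_lt 1⟩,
      x - ((z.appr 1 : ℕ) : ℚ_[p]) * (p : ℚ_[p]) ^ (n : ℤ), ?_, by ring⟩
    have hdiff : x - ((z.appr 1 : ℕ) : ℚ_[p]) * (p : ℚ_[p]) ^ (n : ℤ)
        = ((z - (z.appr 1 : ℤ_[p]) : ℤ_[p]) : ℚ_[p]) * (p : ℚ_[p]) ^ (n : ℤ) := by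
      push_cast
      rw [sub_mul, mul_assoc, ← zpow_add₀ hpQ, neg_add_cancel, zpow_zero, mul_one]
    rw [hdiff, norm_mul, Padic.norm_p_zpow]
    have hnz : ‖((z - (z.appr 1 : ℤ_[p]) : ℤ_[p]) : ℚ_[p])‖ ≤ (p : ℝ)⁻¹ := by
      rw [← PadicInt.norm_def, ← hc, pow_one]
      calc ‖c * (p : ℤ_[p])‖ = ‖c‖ * ‖(p : ℤ_[p])‖ := norm_mul _ _
        _ ≤ 1 * (p : ℝ)⁻¹ := by
            rw [PadicInt.norm_p]
            gcongr
            exact c.norm_le_one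
        _ = (p : ℝ)⁻¹ := one_mul _
    calc ‖((z - (z.appr 1 : ℤ_[p]) : ℤ_[p]) : ℚ_[p])‖ * (p : ℝ) ^ (-(n : ℤ))
        ≤ (p : ℝ)⁻¹ * (p : ℝ) ^ (-(n : ℤ)) := by gcongr
      _ = (p : ℝ) ^ (-(((n : ℕ) + 1 : ℕ) : ℤ)) := by
          rw [← zpow_neg_one, ← zpow_add₀ (ne_of_gt hp0)]
          norm_num
  · rintro ⟨j, y, hy, rfl⟩
    have h1 : ‖((j : ℕ) : ℚ_[p]) * (p : ℚ_[p]) ^ (n : ℤ)‖ ≤ (p : ℝ) ^ (-(n : ℤ)) := by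
      rw [norm_mul, Padic.norm_p_zpow]
      exact mul_le_of_le_one_left (by positivity)
        (by exact_mod_cast Padic.norm_int_le_one ((j : ℕ) : ℤ))
    have h2 : ‖y‖ ≤ (p : ℝ) ^ (-(n : ℤ)) := by
      refine le_trans hy ?_
      apply zpow_le_zpow_right₀ (le_of_lt hp1)
      push_cast; omega
    exact le_trans (Padic.nonarchimedean _ _) (max_le h1 h2)

lemma Bset_disj (n : ℕ) :
    Pairwise (Function.onFun Disjoint fun j : Fin p =>
      (fun y => ((j : ℕ) : ℚ_[p]) * (p : ℚ_[p]) ^ (n : ℤ) + y) '' Bset p (n + 1)) := by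
  have hp1 : (1 : ℝ) < p := hp1R
  have hp0 : (0 : ℝ) < p := by linarith
  intro i j hij
  rw [Function.onFun, Set.disjoint_left]
  rintro x ⟨y, hy, rfl⟩ ⟨y', hy', heq⟩
  have hdne : ((j : ℕ) : ℤ) - ((i : ℕ) : ℤ) ≠ 0 := by
    rw [sub_ne_zero]
    intro h
    exact hij (Fin.ext (by exact_mod_cast h.symm))
  have hnotdvd : ¬ ((p : ℤ) ∣ ((j : ℕ) : ℤ) - ((i : ℕ) : ℤ)) := by
    intro hdvd
    have habs := Int.le_of_dvd (abs_pos.mpr hdne) ((dvd_abs _ _).mpr hdvd)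
    rw [Int.abs_eq_natAbs] at habs
    have hi := i.isLt
    have hj := j.isLt
    omega
  have hnorm1 : ‖((((j : ℕ) : ℤ) - ((i : ℕ) : ℤ) : ℤ) : ℚ_[p])‖ = 1 := by
    refine le_antisymm (Padic.norm_int_le_one _) ?_
    by_contra hlt
    push_neg at hlt
    exact hnotdvd (Padic.norm_intCast_lt_one_iff.mp hlt)
  have hkey : ((((j : ℕ) : ℤ) - ((i : ℕ) : ℤ) : ℤ) : ℚ_[p]) * (p : ℚ_[p]) ^ (n : ℤ) = y - y' := by
    push_cast
    linear_combination heq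
  have hnorml : ‖((((j : ℕ) : ℤ) - ((i : ℕ) : ℤ) : ℤ) : ℚ_[p]) * (p : ℚ_[p]) ^ (n : ℤ)‖
      = (p : ℝ) ^ (-(n : ℤ)) := by
    rw [norm_mul, hnorm1, one_mul, Padic.norm_p_zpow]
  have hnormr : ‖y - y'‖ ≤ (p : ℝ) ^ (-(((n : ℕ) + 1 : ℕ) : ℤ)) := by
    have h := Padic.nonarchimedean y (-y')
    have h' : ‖y - y'‖ ≤ max ‖y‖ ‖y'‖ := by
      simpa [sub_eq_add_neg] using h
    exact le_trans h' (max_le hy hy')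
  rw [hkey] at hnorml
  rw [hnorml] at hnormr
  have : (p : ℝ) ^ (-(((n : ℕ) + 1 : ℕ) : ℤ)) < (p : ℝ) ^ (-(n : ℤ)) := by
    apply zpow_lt_zpow_right₀ hp1
    push_cast
    omega
  linarith

instance : (padicHaar p).IsAddLeftInvariant := by
  unfold padicHaar; infer_instance

instance : (padicHaar p).Regular := by
  unfold padicHaar; infer_instance

lemma measure_Bset (n : ℕ) :
    padicHaar p (Bset p n) = ENNReal.ofReal ((p : ℝ) ^ (-(n : ℤ))) := by
  have hp1 : (1 : ℝ) < p := hp1R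
  have hp0 : (0 : ℝ) < p := by linarith
  induction n with
  | zero =>
    have h0 : Bset p 0 = (padicUnitBall p : Set ℚ_[p]) := by
      ext x
      simp [Bset, padicUnitBall]
      exact Iff.rfl
    rw [h0]
    rw [show padicHaar p = Measure.addHaarMeasure (padicUnitBall p) from rfl]
    rw [Measure.addHaarMeasure_self]
    norm_num
  | succ n ih =>
    have hcover := Bset_cover (p := p) n
    have hdisj := Bset_disj (p := p) n
    have himage : ∀ j : Fin p,
        (fun y => ((j : ℕ) : ℚ_[p]) * (p : ℚ_[p]) ^ (n : ℤ) + y) '' Bset p (n + 1)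
          = (fun y => -(((j : ℕ) : ℚ_[p]) * (p : ℚ_[p]) ^ (n : ℤ)) + y) ⁻¹' Bset p (n + 1) := by
      intro j
      ext t
      constructor
      · rintro ⟨y, hy, rfl⟩
        simpa using hy
      · intro ht
        exact ⟨_, ht, by ring⟩
    have htrans : ∀ j : Fin p,
        padicHaar p ((fun y => ((j : ℕ) : ℚ_[p]) * (p : ℚ_[p]) ^ (n : ℤ) + y) '' Bset p (n + 1))
          = padicHaar p (Bset p (n + 1)) := by
      intro j
      rw [himage j]
      exact measure_preimage_add _ _ _
    have hmeas : ∀ j : Fin p, MeasurableSet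
        ((fun y => ((j : ℕ) : ℚ_[p]) * (p : ℚ_[p]) ^ (n : ℤ) + y) '' Bset p (n + 1)) := by
      intro j
      rw [himage j]
      exact (measurableSet_Bset (n + 1)).preimage (measurable_const_add _)
    have hμ : padicHaar p (Bset p n) = (p : ℝ≥0∞) * padicHaar p (Bset p (n + 1)) := by
      rw [hcover, measure_iUnion hdisj hmeas]
      simp only [htrans]
      rw [tsum_fintype, Finset.sum_const, Finset.card_univ, Fintype.card_fin, nsmul_eq_mul]
    rw [ih] at hμ
    have hr : (p : ℝ) * (p : ℝ) ^ (-(((n : ℕ) + 1 : ℕ)) : ℤ) = (p : ℝ) ^ (-(n : ℤ)) := by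
      calc (p : ℝ) * (p : ℝ) ^ (-(((n : ℕ) + 1 : ℕ)) : ℤ)
          = (p : ℝ) ^ (1 : ℤ) * (p : ℝ) ^ (-(((n : ℕ) + 1 : ℕ)) : ℤ) := by rw [zpow_one]
        _ = (p : ℝ) ^ ((1 : ℤ) + -(((n : ℕ) + 1 : ℕ))) := (zpow_add₀ (ne_of_gt hp0) _ _).symm
        _ = (p : ℝ) ^ (-(n : ℤ)) := by congr 1; push_cast; ring
    have hofreal : ENNReal.ofReal ((p : ℝ) ^ (-(n : ℤ)))
        = (p : ℝ≥0∞) * ENNReal.ofReal ((p : ℝ) ^ (-(((n : ℕ) + 1 : ℕ)) : ℤ)) := by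
      rw [show ((p : ℕ) : ℝ≥0∞) = ENNReal.ofReal (p : ℝ) from (ENNReal.ofReal_natCast p).symm]
      rw [← ENNReal.ofReal_mul (le_of_lt hp0), hr]
    rw [hofreal] at hμ
    exact ((ENNReal.mul_right_inj (by exact_mod_cast (Fact.out : p.Prime).ne_zero)
      (ENNReal.natCast_ne_top p)).mp hμ).symm

variable (p)

def Ann (n : ℕ) : Set ℚ_[p] := Bset p (n + 1) \ Bset p (n + 2)

variable {p}

lemma measurableSet_Ann (n : ℕ) : MeasurableSet (Ann p n) :=
  (measurableSet_Bset _).diff (measurableSet_Bset _)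

lemma Bset_antitone {m k : ℕ} (h : m ≤ k) : Bset p k ⊆ Bset p m := by
  intro x hx
  simp only [Bset, Set.mem_setOf_eq] at hx ⊢
  refine le_trans hx ?_
  apply zpow_le_zpow_right₀ (le_of_lt (hp1R (p := p)))
  omega

lemma measure_Ann (n : ℕ) : padicHaar p (Ann p n)
    = ENNReal.ofReal ((p : ℝ) ^ (-((n + 1 : ℕ)) : ℤ) - (p : ℝ) ^ (-((n + 2 : ℕ)) : ℤ)) := by
  have hp1 : (1 : ℝ) < p := hp1R
  rw [Ann, measure_diff (Bset_antitone (by omega))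
    (measurableSet_Bset _).nullMeasurableSet
    (by rw [measure_Bset]; exact ENNReal.ofReal_ne_top)]
  rw [measure_Bset, measure_Bset, ← ENNReal.ofReal_sub _ (by positivity)]

lemma Ann_norm_eq {n : ℕ} {x : ℚ_[p]} (hx : x ∈ Ann p n) :
    ‖x‖ = (p : ℝ) ^ (-((n + 1 : ℕ)) : ℤ) := by
  obtain ⟨h1, h2⟩ := hx
  refine le_antisymm h1 ?_
  by_contra hlt
  push_neg at hlt
  apply h2
  show ‖x‖ ≤ (p : ℝ) ^ (-((n + 2 : ℕ)) : ℤ)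
  rw [Padic.norm_le_pow_iff_norm_lt_pow_add_one]
  rwa [show (-((n + 2 : ℕ) : ℤ) + 1) = -((n + 1 : ℕ) : ℤ) by push_cast; ring]

lemma Ann_disj : Pairwise (Function.onFun Disjoint (Ann p)) := by
  have hp1 : (1 : ℝ) < p := hp1R
  intro m k hmk
  rw [Function.onFun, Set.disjoint_left]
  intro x hm hk
  have h1 := Ann_norm_eq hm
  have h2 := Ann_norm_eq hk
  rw [h1] at h2
  rcases lt_or_gt_of_ne hmk with h | h
  · have : (p : ℝ) ^ (-((k + 1 : ℕ)) : ℤ) < (p : ℝ) ^ (-((m + 1 : ℕ)) : ℤ) := by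
      apply zpow_lt_zpow_right₀ hp1; push_cast; omega
    rw [h2] at this
    exact lt_irrefl _ this
  · have : (p : ℝ) ^ (-((m + 1 : ℕ)) : ℤ) < (p : ℝ) ^ (-((k + 1 : ℕ)) : ℤ) := by
      apply zpow_lt_zpow_right₀ hp1; push_cast; omega
    rw [h2] at this
    exact lt_irrefl _ this

lemma padicHaar_zero_null : padicHaar p {(0 : ℚ_[p])} = 0 := by
  have hp1 : (1 : ℝ) < p := hp1R
  have hp0 : (0 : ℝ) < p := by linarith
  have hle : ∀ n : ℕ, padicHaar p {(0 : ℚ_[p])} ≤ ENNReal.ofReal ((p : ℝ) ^ (-(n : ℤ))) := by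
    intro n
    rw [← measure_Bset]
    apply measure_mono
    intro x hx
    simp only [Set.mem_singleton_iff] at hx
    subst hx
    show ‖(0 : ℚ_[p])‖ ≤ _
    rw [norm_zero]
    positivity
  have htend : Tendsto (fun n : ℕ => ENNReal.ofReal ((p : ℝ) ^ (-(n : ℤ)))) atTop (𝓝 0) := by
    have hreal : Tendsto (fun n : ℕ => (p : ℝ) ^ (-(n : ℤ))) atTop (𝓝 0) := by
      have : (fun n : ℕ => (p : ℝ) ^ (-(n : ℤ))) = fun n : ℕ => ((p : ℝ)⁻¹) ^ n := by
        funext n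
        rw [inv_pow, ← zpow_natCast, ← zpow_neg]
      rw [this]
      exact tendsto_pow_atTop_nhds_zero_of_lt_one (by positivity) (by
        rw [inv_lt_one_iff₀]; right; exact hp1)
    have := ENNReal.tendsto_ofReal hreal
    simpa using this
  have := ge_of_tendsto' htend hle
  exact le_antisymm this (zero_le)

lemma D_eq_iUnion :
    {x : ℚ_[p] | x ≠ 0 ∧ ‖x‖ < 1} = ⋃ n, Ann p n := by
  have hp1 : (1 : ℝ) < p := hp1R
  have hp0 : (0 : ℝ) < p := by linarith
  ext x
  simp only [Set.mem_setOf_eq, Set.mem_iUnion]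
  constructor
  · rintro ⟨hx0, hx1⟩
    have hxpos : 0 < ‖x‖ := norm_pos_iff.mpr hx0
    have hex : ∃ k : ℕ, ¬ (‖x‖ ≤ (p : ℝ) ^ (-(k : ℤ))) := by
      obtain ⟨k, hk⟩ := exists_pow_lt_of_lt_one hxpos
        (show (p : ℝ)⁻¹ < 1 by rw [inv_lt_one_iff₀]; right; exact hp1)
      refine ⟨k, not_le.mpr ?_⟩
      calc (p : ℝ) ^ (-(k : ℤ)) = ((p : ℝ)⁻¹) ^ k := by
            rw [inv_pow, ← zpow_natCast, ← zpow_neg]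
        _ < ‖x‖ := hk
    have h2le : 2 ≤ Nat.find hex := by
      rw [Nat.le_find_iff]
      intro m hm
      interval_cases m
      · simp only [not_not, Nat.cast_zero, neg_zero, zpow_zero]
        exact le_of_lt hx1
      · simp only [not_not]
        have : ‖x‖ ≤ (p : ℝ) ^ ((0 : ℤ) - 1) := by
          rw [← Padic.norm_lt_pow_iff_norm_le_pow_sub_one]
          simpa using hx1
        convert this using 2
        norm_num
    obtain ⟨n, hn⟩ : ∃ n : ℕ, Nat.find hex = n + 2 := ⟨Nat.find hex - 2, by omega⟩
    refine ⟨n, ?_, ?_⟩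
    · have := Nat.find_min hex (m := n + 1) (by omega)
      rw [not_not] at this
      exact this
    · have := Nat.find_spec hex
      rw [hn] at this
      exact this
  · rintro ⟨n, hn⟩
    have h1 := Ann_norm_eq hn
    refine ⟨?_, ?_⟩
    · intro h0
      rw [h0, norm_zero] at h1
      have : (0 : ℝ) < (p : ℝ) ^ (-((n + 1 : ℕ)) : ℤ) := by positivity
      linarith [h1 ▸ this]
    · rw [h1]
      calc (p : ℝ) ^ (-((n + 1 : ℕ)) : ℤ) < (p : ℝ) ^ (0 : ℤ) := by
            apply zpow_lt_zpow_right₀ hp1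
            omega
        _ = 1 := zpow_zero _

lemma hasSum_F {q A B : ℝ} (hq0 : 0 ≤ q) (hq1 : q < 1) :
    HasSum (fun n : ℕ => (A + ((n : ℝ) + 1) * B) * (q ^ (n + 1) - q ^ (n + 2)))
      ((1 - q) * A * ((1 - q)⁻¹ - 1) + (1 - q) * B * (q / (1 - q) ^ 2)) := by
  have h1 : HasSum (fun n : ℕ => q ^ n) (1 - q)⁻¹ := hasSum_geometric_of_lt_one hq0 hq1
  have h2 : HasSum (fun n : ℕ => (n : ℝ) * q ^ n) (q / (1 - q) ^ 2) :=
    hasSum_coe_mul_geometric_of_norm_lt_one (by rwa [Real.norm_eq_abs, abs_of_nonneg hq0])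
  have h1' := (hasSum_nat_add_iff' 1).mpr h1
  have h2' := (hasSum_nat_add_iff' 1).mpr h2
  simp only [Finset.range_one, Finset.sum_singleton, pow_zero, Nat.cast_zero, zero_mul,
    sub_zero] at h1' h2'
  have hcomb := (h1'.mul_left ((1 - q) * A)).add (h2'.mul_left ((1 - q) * B))
  have hfun : (fun n : ℕ => ((1 - q) * A) * q ^ (n + 1)
        + ((1 - q) * B) * (((n + 1 : ℕ) : ℝ) * q ^ (n + 1)))
      = fun n : ℕ => (A + ((n : ℝ) + 1) * B) * (q ^ (n + 1) - q ^ (n + 2)) := by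
    funext n
    push_cast
    ring
  rw [hfun] at hcomb
  convert hcomb using 2

end Stmt17Aux

theorem stmt17 (p : ℕ) [Fact p.Prime] (R₁ : ℚ_[p] → ℝ)
    (hRlt : ∀ τ : ℚ_[p], τ ≠ 0 → ‖τ‖ < 1 →
      R₁ τ = (p : ℝ) / ((p : ℝ) + 1)
        - ((p : ℝ) * ((p : ℝ) - 1) / (((p : ℝ) + 1) * Real.log p)) * Real.log ‖τ‖)
    (hRge : ∀ τ : ℚ_[p], 1 ≤ ‖τ‖ → R₁ τ = 0) :
    (∀ τ : ℚ_[p], 0 < ‖τ‖ → ‖τ‖ < 1 → R₁ τ > 0) ∧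
    ∫ τ : ℚ_[p], R₁ τ ∂(padicHaar p) = 1 := by
  have hp1 : (1 : ℝ) < p := Stmt17Aux.hp1R
  have hp0 : (0 : ℝ) < p := lt_trans one_pos hp1
  have hlogp : 0 < Real.log p := Real.log_pos hp1
  set P : ℝ := (p : ℝ) with hPdef
  set A : ℝ := P / (P + 1) with hAdef
  set C : ℝ := P * (P - 1) / ((P + 1) * Real.log P) with hCdef
  set Bc : ℝ := P * (P - 1) / (P + 1) with hBdef
  have hA : 0 < A := by apply div_pos hp0; linarith
  have hC : 0 < C := by
    apply div_pos
    · nlinarith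
    · positivity
  have hBc : 0 < Bc := by apply div_pos; nlinarith; linarith
  constructor
  · intro τ hτ0 hτ1
    have hτne : τ ≠ 0 := norm_pos_iff.mp hτ0
    rw [hRlt τ hτne hτ1]
    have hlog : Real.log ‖τ‖ < 0 := Real.log_neg hτ0 hτ1
    nlinarith [mul_pos hC (neg_pos.mpr hlog)]
  · set μ := padicHaar p with hμdef
    set D : Set ℚ_[p] := {x | x ≠ 0 ∧ ‖x‖ < 1} with hDdef
    have hDmeas : MeasurableSet D := by
      have : D = {x : ℚ_[p] | x ≠ 0} ∩ {x | ‖x‖ < 1} := rfl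
      rw [this]
      exact (isOpen_ne.measurableSet).inter
        ((isOpen_lt continuous_norm continuous_const).measurableSet)
    set f : ℚ_[p] → ℝ := fun x => A - C * Real.log ‖x‖ with hfdef
    have hfmeas : Measurable f :=
      measurable_const.sub ((Real.measurable_log.comp measurable_norm).const_mul C)
    set g : ℚ_[p] → ℝ := D.indicator f with hgdef
    have hgmeas : Measurable g := hfmeas.indicator hDmeas
    have hgnonneg : ∀ x, 0 ≤ g x := by
      intro x
      rw [hgdef]
      by_cases hx : x ∈ D
      · rw [Set.indicator_of_mem hx]
        have hlog : Real.log ‖x‖ ≤ 0 := Real.log_nonpos (norm_nonneg _) (le_of_lt hx.2)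
        have : C * Real.log ‖x‖ ≤ 0 := mul_nonpos_of_nonneg_of_nonpos (le_of_lt hC) hlog
        show 0 ≤ A - C * Real.log ‖x‖
        linarith
      · rw [Set.indicator_of_notMem hx]
    have hnull : μ {(0 : ℚ_[p])} = 0 := Stmt17Aux.padicHaar_zero_null
    have hae : R₁ =ᵐ[μ] g := by
      apply Filter.eventuallyEq_of_mem (s := {(0 : ℚ_[p])}ᶜ)
      · rw [mem_ae_iff, compl_compl]
        exact hnull
      · intro x hx0
        simp only [Set.mem_compl_iff, Set.mem_singleton_iff] at hx0
        by_cases h1 : ‖x‖ < 1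
        · have hmem : x ∈ D := ⟨hx0, h1⟩
          rw [hRlt x hx0 h1, hgdef, Set.indicator_of_mem hmem]
        · rw [hRge x (not_lt.mp h1), hgdef,
            Set.indicator_of_notMem (fun hmem => h1 hmem.2)]
    rw [integral_congr_ae hae,
      integral_eq_lintegral_of_nonneg_ae (ae_of_all μ hgnonneg) hgmeas.aestronglyMeasurable]
    have hlift : (fun x => ENNReal.ofReal (g x)) = D.indicator (fun x => ENNReal.ofReal (f x)) := by
      funext x
      by_cases hx : x ∈ D
      · rw [hgdef, Set.indicator_of_mem hx, Set.indicator_of_mem hx]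
      · rw [hgdef, Set.indicator_of_notMem hx, Set.indicator_of_notMem hx,
          ENNReal.ofReal_zero]
    rw [hlift, lintegral_indicator hDmeas _,
      show D = ⋃ n, Stmt17Aux.Ann p n from Stmt17Aux.D_eq_iUnion,
      lintegral_iUnion Stmt17Aux.measurableSet_Ann Stmt17Aux.Ann_disj]
    set q : ℝ := P⁻¹ with hqdef
    have hq0 : 0 ≤ q := by positivity
    have hq1 : q < 1 := by rw [hqdef, inv_lt_one_iff₀]; right; exact hp1
    have hzpow : ∀ k : ℕ, (P : ℝ) ^ (-(k : ℤ)) = q ^ k := by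
      intro k
      rw [hqdef, inv_pow, ← zpow_natCast P, ← zpow_neg]
    have hpiece : ∀ n : ℕ, ∫⁻ x in Stmt17Aux.Ann p n, ENNReal.ofReal (f x) ∂μ
        = ENNReal.ofReal ((A + ((n : ℝ) + 1) * Bc) * (q ^ (n + 1) - q ^ (n + 2))) := by
      intro n
      have hval : ∀ x ∈ Stmt17Aux.Ann p n,
          ENNReal.ofReal (f x) = ENNReal.ofReal (A + ((n : ℝ) + 1) * Bc) := by
        intro x hx
        congr 1
        rw [hfdef]
        show A - C * Real.log ‖x‖ = _
        rw [Stmt17Aux.Ann_norm_eq hx, Real.log_zpow]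
        rw [hCdef, hBdef]
        push_cast
        have hlogne : Real.log P ≠ 0 := ne_of_gt hlogp
        field_simp
        ring
      rw [setLIntegral_congr_fun (Stmt17Aux.measurableSet_Ann n) hval,
        setLIntegral_const, Stmt17Aux.measure_Ann]
      have hsub : (P : ℝ) ^ (-((n + 1 : ℕ)) : ℤ) - (P : ℝ) ^ (-((n + 2 : ℕ)) : ℤ)
          = q ^ (n + 1) - q ^ (n + 2) := by
        rw [hzpow (n + 1), hzpow (n + 2)]
      rw [hsub, ← ENNReal.ofReal_mul]
      have : 0 ≤ A + ((n : ℝ) + 1) * Bc := by positivity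
      exact this
    simp only [hpiece]
    set F : ℕ → ℝ := fun n => (A + ((n : ℝ) + 1) * Bc) * (q ^ (n + 1) - q ^ (n + 2)) with hFdef
    have hFnonneg : ∀ n, 0 ≤ F n := by
      intro n
      apply mul_nonneg
      · positivity
      · have : q ^ (n + 2) ≤ q ^ (n + 1) := pow_le_pow_of_le_one hq0 (le_of_lt hq1) (by omega)
        linarith
    have hFsum : HasSum F 1 := by
      have h := Stmt17Aux.hasSum_F (q := q) (A := A) (B := Bc) hq0 hq1
      have hval : (1 - q) * A * ((1 - q)⁻¹ - 1) + (1 - q) * Bc * (q / (1 - q) ^ 2) = 1 := by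
        have hPne : P ≠ 0 := ne_of_gt hp0
        have h1mqpos : (0 : ℝ) < 1 - q := by linarith
        have h1mqne : (1 : ℝ) - q ≠ 0 := ne_of_gt h1mqpos
        have hP1ne : P + 1 ≠ 0 := ne_of_gt (by linarith)
        have hPm1ne : P - 1 ≠ 0 := ne_of_gt (by linarith)
        rw [hAdef, hBdef, hqdef] at *
        field_simp
        ring
      exact hval ▸ h
    rw [← ENNReal.ofReal_tsum_of_nonneg hFnonneg hFsum.summable, hFsum.tsum_eq,
      ENNReal.ofReal_one, ENNReal.toReal_one]
end
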